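/- arXiv:1912.06336 — 6 statements merged into one kernel-verified Lean document; each statement's English description precedes it below -/
import Mathlib

section
/- Let m, n ≥ 1, let x₁, x₂ ∈ 𝔽₂ⁿ with x₁ ≠ x₂, and let y₁, y₂ ∈ 𝔽₂ᵐ. Then the number of pairs (t, b) ∈ 𝔽₂^{m+n−1} × 𝔽₂ᵐ such that h_{t,b}(x₁) = y₁ and h_{t,b}(x₂) = y₂ equals 2^{n−1}; equivalently, if (t, b) is chosen uniformly at random, then Pr_{t,b}[h_{t,b}(x₁) = y₁ ∧ h_{t,b}(x₂) = y₂] = 1/2^{2m} (pairwise independence of the Toeplitz hash family). -/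
/-- The `m × n` Toeplitz matrix over `𝔽₂` determined by the vector
`t ∈ 𝔽₂^{m+n-1}` recording its first row and first column:
entry `(i, j)` is `t (i + (n-1) - j)`, so that `a_{i,j} = a_{i+1,j+1}`. -/
def toeplitz (m n : ℕ) (t : Fin (m + n - 1) → ZMod 2) :
    Matrix (Fin m) (Fin n) (ZMod 2) :=
  Matrix.of fun i j => t ⟨i.val + (n - 1) - j.val, by
    have hi := i.isLt; have hj := j.isLt; omega⟩

/-- The Toeplitz hash function `h_{t,b}(x) = A_t x + b`. -/
def hashTB (m n : ℕ) (t : Fin (m + n - 1) → ZMod 2) (b : Fin m → ZMod 2)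
    (x : Fin n → ZMod 2) : Fin m → ZMod 2 :=
  (toeplitz m n t).mulVec x + b

open Polynomial in
lemma toeplitz_surj (m n : ℕ) (hn : 1 ≤ n) (z : Fin n → ZMod 2) (hz : z ≠ 0)
    (w : Fin m → ZMod 2) : ∃ t, (toeplitz m n t).mulVec z = w := by
  classical
  have two : ∀ a : ZMod 2, a ≠ 0 → a = 1 := by decide
  set Z : (ZMod 2)[X] := ∑ j : Fin n, monomial (j : ℕ) (z j) with hZ
  have hZcoeff : ∀ a : ℕ, ∀ h : a < n, Z.coeff a = z ⟨a, h⟩ := by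
    intro a h
    rw [hZ, finset_sum_coeff]
    rw [Finset.sum_eq_single (⟨a, h⟩ : Fin n)]
    · simp
    · intro b _ hb
      rw [coeff_monomial, if_neg]
      intro hba; exact hb (by ext; simp [hba])
    · simp
  have hZcoeff0 : ∀ a : ℕ, n ≤ a → Z.coeff a = 0 := by
    intro a h
    rw [hZ, finset_sum_coeff]
    apply Finset.sum_eq_zero
    intro b _
    rw [coeff_monomial, if_neg]
    omega
  have hZne : Z ≠ 0 := by
    obtain ⟨j, hj⟩ : ∃ j, z j ≠ 0 := by
      by_contra h; push_neg at h; exact hz (funext h)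
    intro h
    have := hZcoeff j j.isLt
    simp only [h, coeff_zero] at this
    exact hj (by simpa using this.symm)
  set k : ℕ := Z.natDegree with hk
  have hlc : Z.coeff k ≠ 0 := by
    rw [hk, ← leadingCoeff]; exact leadingCoeff_ne_zero.2 hZne
  have hkn : k < n := by
    by_contra h; push_neg at h
    exact hlc (hZcoeff0 k h)
  have hmonic : Z.Monic := by
    unfold Polynomial.Monic leadingCoeff
    exact two _ hlc
  -- support of z lies in [0, k]
  have hsupp : ∀ j : Fin n, z j ≠ 0 → (j : ℕ) ≤ k := by
    intro j hj
    apply le_natDegree_of_ne_zero (n := (j : ℕ))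
    rw [hZcoeff j j.isLt]; simpa using hj
  set W : (ZMod 2)[X] := ∑ i : Fin m, monomial ((i : ℕ) + k) (w i) with hW
  have hWcoeff : ∀ i : Fin m, W.coeff ((i : ℕ) + k) = w i := by
    intro i
    rw [hW, finset_sum_coeff]
    rw [Finset.sum_eq_single i]
    · simp
    · intro b _ hb
      rw [coeff_monomial, if_neg]
      intro hba; exact hb (by ext; omega)
    · simp
  set Q : (ZMod 2)[X] := W /ₘ Z with hQ
  have hdiv : W %ₘ Z + Z * Q = W := modByMonic_add_div W Z
  have hR : ∀ a : ℕ, k ≤ a → (W %ₘ Z).coeff a = 0 := by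
    intro a ha
    apply coeff_eq_zero_of_degree_lt
    calc (W %ₘ Z).degree < Z.degree := degree_modByMonic_lt W hmonic
    _ = (k : WithBot ℕ) := degree_eq_natDegree hZne
    _ ≤ (a : WithBot ℕ) := by exact_mod_cast Nat.cast_le.2 ha
  refine ⟨fun r => Q.coeff ((r : ℕ) + k + 1 - n), ?_⟩
  funext i
  have key : ((toeplitz m n (fun r => Q.coeff ((r : ℕ) + k + 1 - n))).mulVec z) i
      = (Q * Z).coeff ((i : ℕ) + k) := by
    rw [hZ, Finset.mul_sum]
    rw [finset_sum_coeff]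
    unfold Matrix.mulVec dotProduct toeplitz
    simp only [Matrix.of_apply]
    apply Finset.sum_congr rfl
    intro j _
    by_cases hzj : z j = 0
    · simp [hzj]
    · have hjk : (j : ℕ) ≤ k := hsupp j hzj
      have hidx : (i : ℕ) + (n - 1) - (j : ℕ) + k + 1 - n = (i : ℕ) + k - (j : ℕ) := by
        have := i.isLt; have := j.isLt; omega
      rw [hidx]
      rw [show (monomial (j:ℕ) (z j) : (ZMod 2)[X]) = C (z j) * X ^ (j:ℕ) by
        rw [C_mul_X_pow_eq_monomial]]
      rw [show Q * (C (z j) * X ^ (j:ℕ)) = C (z j) * (Q * X ^ (j:ℕ)) by ring]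
      rw [coeff_C_mul, coeff_mul_X_pow']
      rw [if_pos (by omega)]
      ring
  rw [key]
  have hQZ : Q * Z = W - W %ₘ Z := by
    linear_combination hdiv
  rw [hQZ, coeff_sub, hR _ (by omega), sub_zero, hWcoeff]

lemma toeplitz_add (m n : ℕ) (t₁ t₂ : Fin (m + n - 1) → ZMod 2) :
    toeplitz m n (t₁ + t₂) = toeplitz m n t₁ + toeplitz m n t₂ := by
  ext i j; simp [toeplitz]


lemma card_fiber (m n : ℕ) (hn : 1 ≤ n) (z : Fin n → ZMod 2) (hz : z ≠ 0)
    (w : Fin m → ZMod 2) :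
    (Finset.univ.filter
      (fun t : Fin (m + n - 1) → ZMod 2 => (toeplitz m n t).mulVec z = w)).card
      = 2 ^ (n - 1) := by
  classical
  have vadd : ∀ v : Fin m → ZMod 2, v + v = 0 := by
    intro v; funext i; exact CharTwo.add_self_eq_zero (v i)
  have tadd : ∀ v : Fin (m+n-1) → ZMod 2, v + v = 0 := by
    intro v; funext i; exact CharTwo.add_self_eq_zero (v i)
  have Ladd : ∀ t₁ t₂ : Fin (m+n-1) → ZMod 2,
      (toeplitz m n (t₁ + t₂)).mulVec z
        = (toeplitz m n t₁).mulVec z + (toeplitz m n t₂).mulVec z := by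
    intro t₁ t₂; rw [toeplitz_add, Matrix.add_mulVec]
  -- all fibers have the same cardinality
  have hsame : ∀ w₁ w₂ : Fin m → ZMod 2,
      (Finset.univ.filter
        (fun t : Fin (m + n - 1) → ZMod 2 => (toeplitz m n t).mulVec z = w₁)).card
      = (Finset.univ.filter
        (fun t : Fin (m + n - 1) → ZMod 2 => (toeplitz m n t).mulVec z = w₂)).card := by
    intro w₁ w₂
    obtain ⟨t₁, ht₁⟩ := toeplitz_surj m n hn z hz w₁
    obtain ⟨t₂, ht₂⟩ := toeplitz_surj m n hn z hz w₂
    apply Finset.card_bij' (fun t _ => t + (t₁ + t₂)) (fun t _ => t + (t₁ + t₂))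
    · intro t ht
      simp only [Finset.mem_filter, Finset.mem_univ, true_and] at ht ⊢
      rw [Ladd, Ladd, ht, ht₁, ht₂]
      rw [show w₁ + (w₁ + w₂) = (w₁ + w₁) + w₂ by ring, vadd, zero_add]
    · intro t ht
      simp only [Finset.mem_filter, Finset.mem_univ, true_and] at ht ⊢
      rw [Ladd, Ladd, ht, ht₂, ht₁]
      rw [show w₂ + (w₁ + w₂) = (w₂ + w₂) + w₁ by ring, vadd, zero_add]
    · intro t _
      rw [show t + (t₁ + t₂) + (t₁ + t₂) = t + ((t₁ + t₂) + (t₁ + t₂)) by ring,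
        tadd, add_zero]
    · intro t _
      rw [show t + (t₁ + t₂) + (t₁ + t₂) = t + ((t₁ + t₂) + (t₁ + t₂)) by ring,
        tadd, add_zero]
  -- sum over fibers
  have htotal : (Finset.univ : Finset (Fin (m+n-1) → ZMod 2)).card
      = ∑ w' : Fin m → ZMod 2, (Finset.univ.filter
        (fun t : Fin (m + n - 1) → ZMod 2 => (toeplitz m n t).mulVec z = w')).card := by
    apply Finset.card_eq_sum_card_fiberwise
    intro t _; exact Finset.mem_univ _
  have hconst : ∑ w' : Fin m → ZMod 2, (Finset.univ.filter
        (fun t : Fin (m + n - 1) → ZMod 2 => (toeplitz m n t).mulVec z = w')).card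
      = 2 ^ m * (Finset.univ.filter
        (fun t : Fin (m + n - 1) → ZMod 2 => (toeplitz m n t).mulVec z = w)).card := by
    rw [Finset.sum_congr rfl (fun w' _ => hsame w' w), Finset.sum_const]
    simp [Fintype.card_fun]
  have hcard : (Finset.univ : Finset (Fin (m+n-1) → ZMod 2)).card = 2 ^ (m + n - 1) := by
    simp [Fintype.card_fun]
  rw [htotal, hconst] at hcard
  have : (2:ℕ) ^ (m + n - 1) = 2 ^ m * 2 ^ (n - 1) := by
    rw [← pow_add]; congr 1; omega
  rw [this] at hcard
  exact Nat.eq_of_mul_eq_mul_left (by positivity) hcard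

/-- Pairwise independence of the Toeplitz hash family: for `x₁ ≠ x₂` and any
`y₁, y₂`, the number of pairs `(t, b)` with `h_{t,b}(x₁) = y₁` and
`h_{t,b}(x₂) = y₂` is `2^(n-1)`; equivalently, the fraction of such pairs
among all `2^(n+2m-1)` pairs is `1 / 2^(2m)`. -/
theorem toeplitz_pairwise_independent (m n : ℕ) (hm : 1 ≤ m) (hn : 1 ≤ n)
    (x₁ x₂ : Fin n → ZMod 2) (hx : x₁ ≠ x₂) (y₁ y₂ : Fin m → ZMod 2) :
    (Finset.univ.filter
        (fun p : (Fin (m + n - 1) → ZMod 2) × (Fin m → ZMod 2) =>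
          hashTB m n p.1 p.2 x₁ = y₁ ∧ hashTB m n p.1 p.2 x₂ = y₂)).card
      = 2 ^ (n - 1) ∧
    ((Finset.univ.filter
        (fun p : (Fin (m + n - 1) → ZMod 2) × (Fin m → ZMod 2) =>
          hashTB m n p.1 p.2 x₁ = y₁ ∧ hashTB m n p.1 p.2 x₂ = y₂)).card : ℝ)
        / 2 ^ (n + 2 * m - 1)
      = 1 / 2 ^ (2 * m) := by

  classical
  have hz : x₂ - x₁ ≠ 0 := sub_ne_zero.2 (Ne.symm hx)
  have hcard : (Finset.univ.filter
        (fun p : (Fin (m + n - 1) → ZMod 2) × (Fin m → ZMod 2) =>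
          hashTB m n p.1 p.2 x₁ = y₁ ∧ hashTB m n p.1 p.2 x₂ = y₂)).card
      = 2 ^ (n - 1) := by
    rw [← card_fiber m n hn (x₂ - x₁) hz (y₂ - y₁)]
    apply Finset.card_bij' (fun p _ => p.1)
      (fun t _ => (t, y₁ - (toeplitz m n t).mulVec x₁))
    · intro p hp
      replace hp := (Finset.mem_filter.mp hp).2
      simp only [Finset.mem_filter, Finset.mem_univ, true_and, hashTB] at hp ⊢
      rw [Matrix.mulVec_sub]
      obtain ⟨h1, h2⟩ := hp
      rw [← h1, ← h2]; ring
    · intro t ht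
      refine Finset.mem_filter.mpr ⟨Finset.mem_univ _, ?_⟩
      simp only [Finset.mem_filter, Finset.mem_univ, true_and, hashTB] at ht ⊢
      constructor
      · ring
      · rw [Matrix.mulVec_sub] at ht
        have : (toeplitz m n t).mulVec x₂ = y₂ - y₁ + (toeplitz m n t).mulVec x₁ := by
          rw [← ht]; ring
        rw [this]; ring
    · intro p hp
      replace hp := (Finset.mem_filter.mp hp).2
      simp only [Finset.mem_filter, Finset.mem_univ, true_and, hashTB] at hp
      obtain ⟨h1, _⟩ := hp
      have : y₁ - (toeplitz m n p.1).mulVec x₁ = p.2 := by rw [← h1]; ring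
      rw [this]
    · intro t _; rfl
  refine ⟨hcard, ?_⟩
  rw [hcard]
  have hexp : n + 2 * m - 1 = (n - 1) + 2 * m := by omega
  rw [hexp]
  push_cast
  rw [pow_add]
  have h1 : (2:ℝ) ^ (n-1) ≠ 0 := by positivity
  have h2 : (2:ℝ) ^ (2*m) ≠ 0 := by positivity
  field_simp
end

section
/- Let m, n ≥ 1 and let S ⊆ 𝔽₂ⁿ. For (t, b) ∈ 𝔽₂^{m+n−1} × 𝔽₂ᵐ write c_{t,b}(S) = |{x ∈ S : h_{t,b}(x) = 0^m}|. Then Σ_{(t,b)} (c_{t,b}(S) − |S|/2^m)² ≤ (|S|/2^m) · 2^{n+2m−1}; equivalently, the variance of c_{t,b}(S) over uniformly random (t, b) is at most |S|/2^m. -/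
open PowerSeries Finset

/-- padding a `Fin n`-indexed vector to `ℕ`. -/
def padV (n : ℕ) (z : Fin n → ZMod 2) : ℕ → ZMod 2 :=
  fun j => if h : j < n then z ⟨j, h⟩ else 0

lemma mulVec_eq_coeff (m n : ℕ) (hn : 1 ≤ n) (t : Fin (m + n - 1) → ZMod 2)
    (z : Fin n → ZMod 2) (i : Fin m) :
    (toeplitz m n t).mulVec z i
      = PowerSeries.coeff (i + (n - 1))
          (PowerSeries.mk (padV (m + n - 1) t) * PowerSeries.mk (padV n z)) := by
  rw [PowerSeries.coeff_mul, Finset.Nat.sum_antidiagonal_eq_sum_range_succ_mk]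
  have hL : (toeplitz m n t).mulVec z i
      = ∑ j ∈ Finset.range n, padV (m+n-1) t (i + (n-1) - j) * padV n z j := by
    rw [Matrix.mulVec, dotProduct]
    rw [Finset.sum_range fun j => padV (m+n-1) t (i + (n-1) - j) * padV n z j]
    apply Finset.sum_congr rfl
    intro j _
    have hj := j.isLt
    have hi := i.isLt
    simp only [toeplitz, Matrix.of_apply, padV]
    rw [dif_pos j.isLt, dif_pos (by omega : (i:ℕ) + (n-1) - j < m + n - 1)]
  rw [hL, ← Finset.sum_range_reflect]
  have hstep : ∀ j ∈ Finset.range n,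
      padV (m+n-1) t (i + (n-1) - (n-1-j)) * padV n z (n-1-j)
        = padV (m+n-1) t ((i:ℕ)+j) * padV n z (i + (n-1) - ((i:ℕ)+j)) := by
    intro j hj
    rw [Finset.mem_range] at hj
    congr 2 <;> omega
  rw [Finset.sum_congr rfl hstep]
  -- now RHS sum over range (i + (n-1) + 1); restrict to Ico i (i+n)
  simp only [PowerSeries.coeff_mk, Nat.succ_eq_add_one]
  rw [show (i:ℕ) + (n-1) + 1 = (i:ℕ) + n by omega]
  rw [show (Finset.range ((i:ℕ)+n)) = Finset.Ico 0 ((i:ℕ)+n) by simp]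
  rw [← Finset.sum_Ico_consecutive _ (Nat.zero_le (i:ℕ)) (by omega : (i:ℕ) ≤ (i:ℕ)+n)]
  have h2 : ∑ k ∈ Finset.Ico 0 (i:ℕ), padV (m+n-1) t k * padV n z (i + (n-1) - k) = 0 := by
    apply Finset.sum_eq_zero
    intro k hk
    rw [Finset.mem_Ico] at hk
    have : padV n z ((i:ℕ) + (n-1) - k) = 0 := by
      rw [padV, dif_neg (by omega)]
    rw [this, mul_zero]
  rw [h2, zero_add, Finset.sum_Ico_eq_sum_range]
  rw [show (i:ℕ) + n - (i:ℕ) = n by omega]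

lemma toeplitz_surjective (m n : ℕ) (hn : 1 ≤ n) (z : Fin n → ZMod 2) (hz : z ≠ 0) :
    Function.Surjective
      (fun t : Fin (m + n - 1) → ZMod 2 => (toeplitz m n t).mulVec z) := by
  intro w
  set Z : PowerSeries (ZMod 2) := PowerSeries.mk (padV n z) with hZdef
  obtain ⟨j, hj⟩ : ∃ j, z j ≠ 0 := by
    by_contra h; push_neg at h; exact hz (funext h)
  have hcj : PowerSeries.coeff (j : ℕ) Z ≠ 0 := by
    rw [hZdef, PowerSeries.coeff_mk]
    simpa [padV, j.isLt] using hj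
  have hZ : Z ≠ 0 := fun h0 => hcj (by rw [h0]; simp)
  set v := Z.order.lift (PowerSeries.order_finite_iff_ne_zero.mpr hZ) with hvdef
  have hv : v ≤ n - 1 := by
    rw [hvdef, ENat.lift_le_iff]
    refine le_trans (PowerSeries.order_le (j : ℕ) hcj) ?_
    have hj' : (j : ℕ) ≤ n - 1 := by have := j.isLt; omega
    exact Nat.cast_le.mpr hj'
  set U := PowerSeries.divXPowOrder Z with hUdef
  have hZU : PowerSeries.X ^ v * U = Z := by
    rw [hvdef, ENat.lift_eq_toNat_of_lt_top]
    exact PowerSeries.X_pow_order_mul_divXPowOrder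
  set Ui := PowerSeries.Inv_divided_by_X_pow_order hZ with hUidef
  have hUiU : Ui * U = 1 := PowerSeries.Inv_divided_by_X_pow_order_leftInv hZ
  set W : PowerSeries (ZMod 2) := PowerSeries.mk (padV m w) with hWdef
  set Q := PowerSeries.X ^ (n - 1 - v) * W * Ui with hQdef
  have hZQ : Q * Z = PowerSeries.X ^ (n - 1) * W := by
    have hXX : (PowerSeries.X : PowerSeries (ZMod 2)) ^ (n - 1 - v) * PowerSeries.X ^ v
        = PowerSeries.X ^ (n - 1) := by
      rw [← pow_add]; congr 1; omega
    calc Q * Z = Q * (PowerSeries.X ^ v * U) := by rw [hZU]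
      _ = (PowerSeries.X ^ (n - 1 - v) * PowerSeries.X ^ v) * W * (Ui * U) := by
          rw [hQdef]; ring
      _ = PowerSeries.X ^ (n - 1) * W := by rw [hXX, hUiU, mul_one]
  refine ⟨fun k => PowerSeries.coeff k Q, ?_⟩
  funext i
  show (toeplitz m n (fun k => PowerSeries.coeff k Q)).mulVec z i = w i
  rw [mulVec_eq_coeff m n hn _ z i]
  have hcong :
      PowerSeries.coeff ((i : ℕ) + (n - 1))
        (PowerSeries.mk (padV (m + n - 1) (fun k => PowerSeries.coeff k Q)) * Z)
      = PowerSeries.coeff ((i : ℕ) + (n - 1)) (Q * Z) := by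
    rw [PowerSeries.coeff_mul, PowerSeries.coeff_mul]
    apply Finset.sum_congr rfl
    intro p hp
    rw [Finset.HasAntidiagonal.mem_antidiagonal] at hp
    have hp1 : p.1 < m + n - 1 := by have := i.isLt; omega
    rw [PowerSeries.coeff_mk]
    unfold padV
    rw [dif_pos hp1]
  rw [hcong, hZQ, PowerSeries.coeff_X_pow_mul]
  rw [hWdef, PowerSeries.coeff_mk]
  simp [padV, i.isLt]

/-- The additive hom `t ↦ A_t z`. -/
def phiHom (m n : ℕ) (z : Fin n → ZMod 2) :
    (Fin (m + n - 1) → ZMod 2) →+ (Fin m → ZMod 2) :=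
  AddMonoidHom.mk' (fun t => (toeplitz m n t).mulVec z) (by
    intro a b
    show (toeplitz m n (a + b)).mulVec z
      = (toeplitz m n a).mulVec z + (toeplitz m n b).mulVec z
    have h : toeplitz m n (a + b) = toeplitz m n a + toeplitz m n b := by
      ext i j
      simp [toeplitz]
    rw [h, Matrix.add_mulVec])

lemma card_ker (m n : ℕ) (hn : 1 ≤ n) (z : Fin n → ZMod 2) (hz : z ≠ 0) :
    (Finset.univ.filter
        fun t : Fin (m + n - 1) → ZMod 2 => (toeplitz m n t).mulVec z = 0).card
      = 2 ^ (n - 1) := by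
  classical
  set φ := phiHom m n z with hφ
  have hsurj : Function.Surjective φ := toeplitz_surjective m n hn z hz
  have hquot := AddSubgroup.card_eq_card_quotient_mul_card_addSubgroup φ.ker
  have hq : Nat.card ((Fin (m + n - 1) → ZMod 2) ⧸ φ.ker) = 2 ^ m := by
    rw [Nat.card_congr (QuotientAddGroup.quotientKerEquivOfSurjective φ hsurj).toEquiv]
    simp [Nat.card_eq_fintype_card, ZMod.card]
  have hdom : Nat.card (Fin (m + n - 1) → ZMod 2) = 2 ^ (m + n - 1) := by
    simp [Nat.card_eq_fintype_card, ZMod.card]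
  have hker : Nat.card φ.ker = 2 ^ (n - 1) := by
    have h2 : (2:ℕ) ^ m * Nat.card φ.ker = 2 ^ m * 2 ^ (n - 1) := by
      rw [← hq, ← hquot, hdom, hq, ← pow_add]
      congr 1
      omega
    exact Nat.eq_of_mul_eq_mul_left (by positivity) h2
  rw [← hker]
  rw [Nat.card_eq_fintype_card]
  rw [← Fintype.card_subtype]
  apply Fintype.card_congr
  exact Equiv.subtypeEquivRight fun x => Iff.symm AddMonoidHom.mem_ker

lemma count_single (m n : ℕ) (x : Fin n → ZMod 2) :
    (Finset.univ.filter
        fun p : (Fin (m + n - 1) → ZMod 2) × (Fin m → ZMod 2) =>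
          hashTB m n p.1 p.2 x = 0).card = 2 ^ (m + n - 1) := by
  classical
  have himg : (Finset.univ.filter
        fun p : (Fin (m + n - 1) → ZMod 2) × (Fin m → ZMod 2) =>
          hashTB m n p.1 p.2 x = 0)
      = Finset.univ.image
          (fun t : Fin (m + n - 1) → ZMod 2 => (t, -(toeplitz m n t).mulVec x)) := by
    ext p
    simp only [Finset.mem_filter, Finset.mem_univ, true_and, Finset.mem_image]
    constructor
    · intro h
      exact ⟨p.1, Prod.ext rfl (neg_eq_of_add_eq_zero_right h)⟩
    · rintro ⟨t, rfl⟩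
      simp [hashTB]
  rw [himg, Finset.card_image_of_injective _ (fun a b h => congrArg Prod.fst h)]
  simp [ZMod.card]

lemma count_pair (m n : ℕ) (hn : 1 ≤ n) {x y : Fin n → ZMod 2} (hxy : x ≠ y) :
    (Finset.univ.filter
        fun p : (Fin (m + n - 1) → ZMod 2) × (Fin m → ZMod 2) =>
          hashTB m n p.1 p.2 x = 0 ∧ hashTB m n p.1 p.2 y = 0).card = 2 ^ (n - 1) := by
  classical
  have hz : x - y ≠ 0 := sub_ne_zero.mpr hxy
  have himg : (Finset.univ.filter
        fun p : (Fin (m + n - 1) → ZMod 2) × (Fin m → ZMod 2) =>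
          hashTB m n p.1 p.2 x = 0 ∧ hashTB m n p.1 p.2 y = 0)
      = (Finset.univ.filter
          fun t : Fin (m + n - 1) → ZMod 2 => (toeplitz m n t).mulVec (x - y) = 0).image
          (fun t => (t, -(toeplitz m n t).mulVec x)) := by
    ext p
    simp only [Finset.mem_filter, Finset.mem_univ, true_and, Finset.mem_image]
    constructor
    · rintro ⟨h1, h2⟩
      refine ⟨p.1, ?_, Prod.ext rfl (neg_eq_of_add_eq_zero_right h1)⟩
      rw [Matrix.mulVec_sub, sub_eq_zero]
      have hx' : (toeplitz m n p.1).mulVec x = -p.2 := eq_neg_of_add_eq_zero_left h1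
      have hy' : (toeplitz m n p.1).mulVec y = -p.2 := eq_neg_of_add_eq_zero_left h2
      rw [hx', hy']
    · rintro ⟨t, ht, rfl⟩
      rw [Matrix.mulVec_sub, sub_eq_zero] at ht
      constructor
      · simp [hashTB]
      · simp [hashTB, ← ht]
  rw [himg, Finset.card_image_of_injective _ (fun a b h => congrArg Prod.fst h)]
  exact card_ker m n hn _ hz


/-- For `S ⊆ 𝔽₂ⁿ` and `c_{t,b}(S) = |{x ∈ S : h_{t,b}(x) = 0}|`, we have
`Σ_{(t,b)} (c_{t,b}(S) − |S|/2^m)² ≤ (|S|/2^m) · 2^(n+2m-1)`; equivalently,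
the variance of `c_{t,b}(S)` over uniformly random `(t, b)` is at most
`|S| / 2^m`. -/
theorem toeplitz_count_variance (m n : ℕ) (hm : 1 ≤ m) (hn : 1 ≤ n)
    (S : Finset (Fin n → ZMod 2)) :
    (∑ p : (Fin (m + n - 1) → ZMod 2) × (Fin m → ZMod 2),
        (((S.filter (fun x => hashTB m n p.1 p.2 x = 0)).card : ℝ)
          - (S.card : ℝ) / 2 ^ m) ^ 2)
      ≤ ((S.card : ℝ) / 2 ^ m) * 2 ^ (n + 2 * m - 1) ∧
    (∑ p : (Fin (m + n - 1) → ZMod 2) × (Fin m → ZMod 2),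
        (((S.filter (fun x => hashTB m n p.1 p.2 x = 0)).card : ℝ)
          - (S.card : ℝ) / 2 ^ m) ^ 2) / 2 ^ (n + 2 * m - 1)
      ≤ (S.card : ℝ) / 2 ^ m := by
  classical
  have hsum1 : ∑ p : (Fin (m + n - 1) → ZMod 2) × (Fin m → ZMod 2),
      (S.filter (fun x => hashTB m n p.1 p.2 x = 0)).card
      = S.card * 2 ^ (m + n - 1) := by
    rw [Finset.sum_congr rfl (fun p _ => Finset.card_filter _ _), Finset.sum_comm]
    have h1 : ∀ x ∈ S,
        (∑ p : (Fin (m + n - 1) → ZMod 2) × (Fin m → ZMod 2),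
          if hashTB m n p.1 p.2 x = 0 then 1 else 0) = 2 ^ (m + n - 1) := by
      intro x _
      rw [← Finset.card_filter]
      exact count_single m n x
    rw [Finset.sum_congr rfl h1, Finset.sum_const, smul_eq_mul]
  have hsum2 : ∑ p : (Fin (m + n - 1) → ZMod 2) × (Fin m → ZMod 2),
      ((S.filter (fun x => hashTB m n p.1 p.2 x = 0)).card) ^ 2
      ≤ S.card * 2 ^ (m + n - 1) + S.card ^ 2 * 2 ^ (n - 1) := by
    have hexp : ∀ p : (Fin (m + n - 1) → ZMod 2) × (Fin m → ZMod 2),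
        ((S.filter (fun x => hashTB m n p.1 p.2 x = 0)).card) ^ 2
        = ∑ x ∈ S, ∑ y ∈ S,
            if hashTB m n p.1 p.2 x = 0 ∧ hashTB m n p.1 p.2 y = 0 then 1 else 0 := by
      intro p
      rw [Finset.card_filter, sq, Finset.sum_mul_sum]
      apply Finset.sum_congr rfl; intro x _
      apply Finset.sum_congr rfl; intro y _
      by_cases h1 : hashTB m n p.1 p.2 x = 0 <;>
        by_cases h2 : hashTB m n p.1 p.2 y = 0 <;> simp [h1, h2]
    rw [Finset.sum_congr rfl (fun p _ => hexp p), Finset.sum_comm]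
    rw [Finset.sum_congr rfl (fun x _ => Finset.sum_comm)]
    have hbound : ∀ x ∈ S, (∑ y ∈ S,
        ∑ p : (Fin (m + n - 1) → ZMod 2) × (Fin m → ZMod 2),
          if hashTB m n p.1 p.2 x = 0 ∧ hashTB m n p.1 p.2 y = 0 then 1 else 0)
        ≤ 2 ^ (m + n - 1) + S.card * 2 ^ (n - 1) := by
      intro x hx
      have hinner : ∀ y, (∑ p : (Fin (m + n - 1) → ZMod 2) × (Fin m → ZMod 2),
          if hashTB m n p.1 p.2 x = 0 ∧ hashTB m n p.1 p.2 y = 0 then 1 else 0)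
          = (Finset.univ.filter
              fun p : (Fin (m + n - 1) → ZMod 2) × (Fin m → ZMod 2) =>
                hashTB m n p.1 p.2 x = 0 ∧ hashTB m n p.1 p.2 y = 0).card := by
        intro y; rw [← Finset.card_filter]
      rw [Finset.sum_congr rfl (fun y _ => hinner y), ← Finset.add_sum_erase _ _ hx]
      apply add_le_add
      · simp only [and_self]
        rw [← count_single m n x]
      · calc (∑ y ∈ S.erase x, (Finset.univ.filter
              fun p : (Fin (m + n - 1) → ZMod 2) × (Fin m → ZMod 2) =>
                hashTB m n p.1 p.2 x = 0 ∧ hashTB m n p.1 p.2 y = 0).card)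
            = ∑ y ∈ S.erase x, 2 ^ (n - 1) := by
              apply Finset.sum_congr rfl
              intro y hy
              exact count_pair m n hn (Finset.ne_of_mem_erase hy).symm
          _ = (S.erase x).card * 2 ^ (n - 1) := by
              rw [Finset.sum_const, smul_eq_mul]
          _ ≤ S.card * 2 ^ (n - 1) := by
              gcongr
              exact Finset.erase_subset _ _
    calc (∑ x ∈ S, ∑ y ∈ S,
        ∑ p : (Fin (m + n - 1) → ZMod 2) × (Fin m → ZMod 2),
          if hashTB m n p.1 p.2 x = 0 ∧ hashTB m n p.1 p.2 y = 0 then 1 else 0)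
        ≤ ∑ _x ∈ S, (2 ^ (m + n - 1) + S.card * 2 ^ (n - 1)) :=
          Finset.sum_le_sum hbound
      _ = S.card * 2 ^ (m + n - 1) + S.card ^ 2 * 2 ^ (n - 1) := by
          rw [Finset.sum_const, smul_eq_mul]; ring
  -- pass to ℝ
  set c : ((Fin (m + n - 1) → ZMod 2) × (Fin m → ZMod 2)) → ℝ :=
    fun p => ((S.filter (fun x => hashTB m n p.1 p.2 x = 0)).card : ℝ) with hc
  set μ : ℝ := (S.card : ℝ) / 2 ^ m with hμ
  have hc1 : ∑ p, c p = (S.card : ℝ) * 2 ^ (m + n - 1) := by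
    rw [hc]; beta_reduce; exact_mod_cast hsum1
  have hc2 : ∑ p, (c p) ^ 2 ≤ (S.card : ℝ) * 2 ^ (m + n - 1)
      + (S.card : ℝ) ^ 2 * 2 ^ (n - 1) := by
    calc ∑ p, (c p) ^ 2
        = ((∑ p : (Fin (m + n - 1) → ZMod 2) × (Fin m → ZMod 2),
            ((S.filter (fun x => hashTB m n p.1 p.2 x = 0)).card) ^ 2 : ℕ) : ℝ) := by
          push_cast
          rfl
      _ ≤ (((S.card * 2 ^ (m + n - 1) + S.card ^ 2 * 2 ^ (n - 1) : ℕ)) : ℝ) := by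
          exact_mod_cast hsum2
      _ = _ := by push_cast; ring
  have hNcard : ((Fintype.card
      ((Fin (m + n - 1) → ZMod 2) × (Fin m → ZMod 2)) : ℕ) : ℝ)
      = 2 ^ (m + n - 1) * 2 ^ m := by
    rw [Fintype.card_prod, Nat.cast_mul]
    congr 1 <;> · simp [ZMod.card]
  have hkey : ∑ p, (c p - μ) ^ 2
      = (∑ p, (c p) ^ 2) - 2 * μ * (∑ p, c p)
        + (Fintype.card ((Fin (m + n - 1) → ZMod 2) × (Fin m → ZMod 2)) : ℝ) * μ ^ 2 := by
    rw [Finset.sum_congr rfl (fun p _ =>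
      (by ring : (c p - μ) ^ 2 = (c p) ^ 2 - 2 * μ * c p + μ ^ 2))]
    rw [Finset.sum_add_distrib, Finset.sum_sub_distrib, ← Finset.mul_sum,
      Finset.sum_const, Finset.card_univ, nsmul_eq_mul]
  have e1 : (2:ℝ) ^ (m + n - 1) = 2 ^ (n - 1) * 2 ^ m := by
    rw [← pow_add]; congr 1; omega
  have e2 : (2:ℝ) ^ (n + 2 * m - 1) = 2 ^ (n - 1) * 2 ^ m * 2 ^ m := by
    rw [← pow_add, ← pow_add]; congr 1; omega
  have hb : (0:ℝ) < 2 ^ m := by positivity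
  have main : ∑ p, (c p - μ) ^ 2 ≤ μ * 2 ^ (n + 2 * m - 1) := by
    rw [hkey]
    have step : (∑ p, (c p) ^ 2) - 2 * μ * (∑ p, c p)
        + (Fintype.card ((Fin (m + n - 1) → ZMod 2) × (Fin m → ZMod 2)) : ℝ) * μ ^ 2
        ≤ ((S.card : ℝ) * 2 ^ (m + n - 1) + (S.card : ℝ) ^ 2 * 2 ^ (n - 1))
          - 2 * μ * ((S.card : ℝ) * 2 ^ (m + n - 1))
          + (2 ^ (m + n - 1) * 2 ^ m) * μ ^ 2 := by
      rw [hc1, hNcard]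
      gcongr
    refine le_trans step (le_of_eq ?_)
    rw [hμ, e1, e2]
    field_simp
    ring
  refine ⟨main, ?_⟩
  rw [div_le_iff₀ (by positivity : (0:ℝ) < 2 ^ (n + 2 * m - 1))]
  exact main
end

section
/- Let m, n ≥ 1 and let S ⊆ 𝔽₂ⁿ satisfy |S| ≥ 2^{m+6}. For (t, b) ∈ 𝔽₂^{m+n−1} × 𝔽₂ᵐ write c_{t,b}(S) = |{x ∈ S : h_{t,b}(x) = 0^m}|. Then the fraction of pairs (t, b) with c_{t,b}(S) < 48 is at most 2^{m+4}/|S|, and in particular at most 1/4. -/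
namespace ToepAux

open Finset

def L (m n : ℕ) (z : Fin n → ZMod 2) :
    (Fin (m + n - 1) → ZMod 2) →ₗ[ZMod 2] (Fin m → ZMod 2) where
  toFun t := (toeplitz m n t).mulVec z
  map_add' t t' := by
    ext i
    simp [toeplitz, Matrix.mulVec, dotProduct, add_mul, Finset.sum_add_distrib]
  map_smul' c t := by
    ext i
    simp [toeplitz, Matrix.mulVec, dotProduct, Finset.mul_sum, mul_assoc]

def E (m n : ℕ) (k : ℕ) (hm : 1 ≤ m) (hn : 1 ≤ n) :
    (Fin m → ZMod 2) →ₗ[ZMod 2] (Fin (m + n - 1) → ZMod 2) where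
  toFun u := fun s => if h : n - 1 - k ≤ s.val ∧ s.val - (n - 1 - k) < m
    then u ⟨s.val - (n - 1 - k), h.2⟩ else 0
  map_add' u u' := by
    ext s
    simp only [Pi.add_apply]
    split_ifs <;> simp
  map_smul' c u := by
    ext s
    simp only [Pi.smul_apply, RingHom.id_apply]
    split_ifs <;> simp

lemma L_surj (m n : ℕ) (hm : 1 ≤ m) (hn : 1 ≤ n) (z : Fin n → ZMod 2) (hz : z ≠ 0) :
    Function.Surjective (L m n z) := by
  classical
  -- maximal index with z k ≠ 0
  have hne : (univ.filter (fun j : Fin n => z j ≠ 0)).Nonempty := by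
    by_contra h
    apply hz
    ext j
    simp only [Finset.not_nonempty_iff_eq_empty, Finset.filter_eq_empty_iff] at h
    simpa using h (Finset.mem_univ j)
  set k : Fin n := (univ.filter (fun j : Fin n => z j ≠ 0)).max' hne with hk
  have hzk : z k ≠ 0 := by
    have := (univ.filter (fun j : Fin n => z j ≠ 0)).max'_mem hne
    simpa using this
  have hkmax : ∀ j : Fin n, z j ≠ 0 → j ≤ k := by
    intro j hj
    exact Finset.le_max' _ j (by simpa using hj)
  -- the composition is injective
  have hinj : Function.Injective ((L m n z).comp (E m n k.val hm hn)) := by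
    rw [← LinearMap.ker_eq_bot]
    rw [LinearMap.ker_eq_bot']
    intro u hu
    by_contra hune
    have hne' : (univ.filter (fun i : Fin m => u i ≠ 0)).Nonempty := by
      by_contra h
      apply hune
      ext i
      simp only [Finset.not_nonempty_iff_eq_empty, Finset.filter_eq_empty_iff] at h
      simpa using h (Finset.mem_univ i)
    set i0 : Fin m := (univ.filter (fun i : Fin m => u i ≠ 0)).max' hne' with hi0
    have hui0 : u i0 ≠ 0 := by
      have := (univ.filter (fun i : Fin m => u i ≠ 0)).max'_mem hne'
      simpa using this
    have hi0max : ∀ i : Fin m, u i ≠ 0 → i ≤ i0 := fun i hi =>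
      Finset.le_max' _ i (by simpa using hi)
    have h0 : ((L m n z).comp (E m n k.val hm hn)) u i0 = 0 := by rw [hu]; rfl
    have hkn : k.val ≤ n - 1 := by have := k.isLt; omega
    -- compute the sum
    have hsum : ((L m n z).comp (E m n k.val hm hn)) u i0
        = ∑ j : Fin n, (E m n k.val hm hn u) ⟨i0.val + (n - 1) - j.val, by
            have := i0.isLt; have := j.isLt; omega⟩ * z j := by
      rfl
    rw [hsum] at h0
    rw [Finset.sum_eq_single k] at h0
    · -- the k term is nonzero
      have hidx : (n - 1 - k.val) ≤ i0.val + (n - 1) - k.val ∧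
          (i0.val + (n - 1) - k.val) - (n - 1 - k.val) < m := by
        constructor <;> omega
      have : (E m n k.val hm hn u) ⟨i0.val + (n - 1) - k.val, by have := i0.isLt; omega⟩
          = u i0 := by
        simp only [E, LinearMap.coe_mk, AddHom.coe_mk, dif_pos hidx]
        congr 1
        ext
        simp only []
        omega
      rw [this] at h0
      exact (mul_ne_zero hui0 hzk) h0
    · intro j _ hjk
      by_cases hzj : z j = 0
      · simp [hzj]
      · have hjk' : j ≤ k := hkmax j hzj
        have hjlt : j.val < k.val := lt_of_le_of_ne (by exact_mod_cast hjk') (by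
          intro h; exact hjk (Fin.ext h))
        have : (E m n k.val hm hn u) ⟨i0.val + (n - 1) - j.val, by
            have := i0.isLt; have := j.isLt; omega⟩ = 0 := by
          simp only [E, LinearMap.coe_mk, AddHom.coe_mk]
          by_cases h : (n - 1 - k.val) ≤ i0.val + (n - 1) - j.val ∧
              (i0.val + (n - 1) - j.val) - (n - 1 - k.val) < m
          · rw [dif_pos h]
            have hgt : i0.val < (i0.val + (n - 1) - j.val) - (n - 1 - k.val) := by omega
            by_contra hne0
            have := hi0max ⟨(i0.val + (n - 1) - j.val) - (n - 1 - k.val), h.2⟩ hne0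
            rw [Fin.le_def] at this
            simp at this
            omega
          · rw [dif_neg h]
        rw [this, zero_mul]
    · intro h; exact absurd (Finset.mem_univ k) h
  have hsurj : Function.Surjective ((L m n z).comp (E m n k.val hm hn)) :=
    LinearMap.injective_iff_surjective.mp hinj
  exact Function.Surjective.of_comp hsurj


lemma card_ker (m n : ℕ) (hm : 1 ≤ m) (hn : 1 ≤ n) (z : Fin n → ZMod 2) (hz : z ≠ 0) :
    (univ.filter fun t : Fin (m + n - 1) → ZMod 2 =>
      (toeplitz m n t).mulVec z = 0).card = 2 ^ (n - 1) := by
  classical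
  have hr : LinearMap.range (L m n z) = ⊤ :=
    LinearMap.range_eq_top.2 (L_surj m n hm hn z hz)
  have h1 : Module.finrank (ZMod 2) (Fin (m + n - 1) → ZMod 2) = m + n - 1 := by
    simp [Module.finrank_pi]
  have h2 : Module.finrank (ZMod 2) (LinearMap.range (L m n z))
      + Module.finrank (ZMod 2) (LinearMap.ker (L m n z)) = m + n - 1 := by
    have h := LinearMap.finrank_range_add_finrank_ker (L m n z)
    rw [h1] at h; exact h
  have h3 : Module.finrank (ZMod 2) (LinearMap.range (L m n z)) = m := by
    rw [hr, finrank_top]; simp [Module.finrank_pi]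
  have h4 : Module.finrank (ZMod 2) (LinearMap.ker (L m n z)) = n - 1 := by omega
  have h5 : Fintype.card (LinearMap.ker (L m n z)) = 2 ^ (n - 1) := by
    rw [Module.card_eq_pow_finrank (K := ZMod 2), h4, ZMod.card]
  rw [← h5]
  rw [← Fintype.card_subtype]
  apply Fintype.card_congr
  apply Equiv.subtypeEquivRight
  intro t
  rw [LinearMap.mem_ker]
  rfl


lemma cardA (m n : ℕ) (x : Fin n → ZMod 2) :
    (univ.filter fun p : (Fin (m + n - 1) → ZMod 2) × (Fin m → ZMod 2) =>
      hashTB m n p.1 p.2 x = 0).card = 2 ^ (m + n - 1) := by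
  classical
  have : (univ.filter fun p : (Fin (m + n - 1) → ZMod 2) × (Fin m → ZMod 2) =>
      hashTB m n p.1 p.2 x = 0).card
      = (univ : Finset (Fin (m + n - 1) → ZMod 2)).card := by
    apply Finset.card_nbij' (fun p => p.1)
      (fun t => (t, -(toeplitz m n t).mulVec x))
    · intro a _; exact Finset.mem_univ _
    · intro t _
      simp only [Finset.mem_coe, Finset.mem_filter, Finset.mem_univ, true_and]; simp only [hashTB]
      exact add_neg_cancel _
    · intro p hp
      simp only [Finset.mem_coe, Finset.mem_filter, Finset.mem_univ, true_and] at hp; simp only [hashTB] at hp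
      have : p.2 = -(toeplitz m n p.1).mulVec x := by
        rw [eq_neg_iff_add_eq_zero, add_comm]; exact hp
      exact Prod.ext rfl this.symm
    · intro t _; rfl
  rw [this]
  simp [ZMod.card]

lemma cardB (m n : ℕ) (hm : 1 ≤ m) (hn : 1 ≤ n) (x y : Fin n → ZMod 2) (hxy : x ≠ y) :
    (univ.filter fun p : (Fin (m + n - 1) → ZMod 2) × (Fin m → ZMod 2) =>
      hashTB m n p.1 p.2 x = 0 ∧ hashTB m n p.1 p.2 y = 0).card = 2 ^ (n - 1) := by
  classical
  have key : ∀ p : (Fin (m + n - 1) → ZMod 2) × (Fin m → ZMod 2),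
      (hashTB m n p.1 p.2 x = 0 ∧ hashTB m n p.1 p.2 y = 0) ↔
      ((toeplitz m n p.1).mulVec (x - y) = 0 ∧ p.2 = -(toeplitz m n p.1).mulVec x) := by
    intro p
    simp only [hashTB, Matrix.mulVec_sub]
    constructor
    · rintro ⟨h1, h2⟩
      have hb : p.2 = -(toeplitz m n p.1).mulVec x := by
        rw [eq_neg_iff_add_eq_zero, add_comm]; exact h1
      have hb' : p.2 = -(toeplitz m n p.1).mulVec y := by
        rw [eq_neg_iff_add_eq_zero, add_comm]; exact h2
      constructor
      · rw [sub_eq_zero]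
        have := hb.symm.trans hb'
        exact neg_injective this
      · exact hb
    · rintro ⟨h1, h2⟩
      have hxy' : (toeplitz m n p.1).mulVec x = (toeplitz m n p.1).mulVec y := by
        rwa [sub_eq_zero] at h1
      constructor
      · rw [h2]; exact add_neg_cancel _
      · rw [h2, hxy']; exact add_neg_cancel _
  rw [Finset.filter_congr (fun p _ => key p)]
  rw [← card_ker m n hm hn (x - y) (sub_ne_zero.2 hxy)]
  apply Finset.card_nbij' (fun p => p.1)
    (fun t => (t, -(toeplitz m n t).mulVec x))
  · intro p hp
    simp only [Finset.mem_coe, Finset.mem_filter, Finset.mem_univ, true_and] at hp ⊢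
    exact hp.1
  · intro t ht
    simp only [Finset.mem_coe, Finset.mem_filter, Finset.mem_univ, true_and] at ht ⊢
    exact ⟨ht, trivial⟩
  · intro p hp
    simp only [Finset.mem_coe, Finset.mem_filter, Finset.mem_univ, true_and] at hp
    exact Prod.ext rfl hp.2.symm
  · intro t _; rfl


lemma sum1 (m n : ℕ) (S : Finset (Fin n → ZMod 2)) :
    ∑ p : (Fin (m + n - 1) → ZMod 2) × (Fin m → ZMod 2),
      (S.filter (fun x => hashTB m n p.1 p.2 x = 0)).card
    = S.card * 2 ^ (m + n - 1) := by
  classical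
  have : ∀ p : (Fin (m + n - 1) → ZMod 2) × (Fin m → ZMod 2),
      (S.filter (fun x => hashTB m n p.1 p.2 x = 0)).card
      = ∑ x ∈ S, if hashTB m n p.1 p.2 x = 0 then 1 else 0 := by
    intro p; rw [Finset.card_filter]
  simp only [this]
  rw [Finset.sum_comm]
  have : ∀ x ∈ S, (∑ p : (Fin (m + n - 1) → ZMod 2) × (Fin m → ZMod 2),
      if hashTB m n p.1 p.2 x = 0 then 1 else 0) = 2 ^ (m + n - 1) := by
    intro x _
    rw [← Finset.card_filter]
    exact cardA m n x
  rw [Finset.sum_congr rfl this, Finset.sum_const, smul_eq_mul]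

lemma sum2 (m n : ℕ) (hm : 1 ≤ m) (hn : 1 ≤ n) (S : Finset (Fin n → ZMod 2)) :
    ∑ p : (Fin (m + n - 1) → ZMod 2) × (Fin m → ZMod 2),
      ((S.filter (fun x => hashTB m n p.1 p.2 x = 0)).card) ^ 2
    = S.card * 2 ^ (m + n - 1) + S.card * (S.card - 1) * 2 ^ (n - 1) := by
  classical
  have expand : ∀ p : (Fin (m + n - 1) → ZMod 2) × (Fin m → ZMod 2),
      ((S.filter (fun x => hashTB m n p.1 p.2 x = 0)).card) ^ 2
      = ∑ x ∈ S, ∑ y ∈ S,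
          if (hashTB m n p.1 p.2 x = 0 ∧ hashTB m n p.1 p.2 y = 0) then 1 else 0 := by
    intro p
    rw [sq, Finset.card_filter, Finset.sum_mul_sum]
    apply Finset.sum_congr rfl; intro x _
    apply Finset.sum_congr rfl; intro y _
    split_ifs with h1 h2 h3 <;> simp_all
  simp only [expand]
  rw [Finset.sum_comm]
  have inner : ∀ x ∈ S, (∑ p : (Fin (m + n - 1) → ZMod 2) × (Fin m → ZMod 2),
        ∑ y ∈ S, if (hashTB m n p.1 p.2 x = 0 ∧ hashTB m n p.1 p.2 y = 0) then 1 else 0)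
      = 2 ^ (m + n - 1) + (S.card - 1) * 2 ^ (n - 1) := by
    intro x hx
    rw [Finset.sum_comm]
    have hy : ∀ y ∈ S, (∑ p : (Fin (m + n - 1) → ZMod 2) × (Fin m → ZMod 2),
          if (hashTB m n p.1 p.2 x = 0 ∧ hashTB m n p.1 p.2 y = 0) then 1 else 0)
        = if y = x then 2 ^ (m + n - 1) else 2 ^ (n - 1) := by
      intro y _
      rw [← Finset.card_filter]
      by_cases hyx : y = x
      · subst hyx
        rw [if_pos rfl, ← cardA m n y]
        congr 1
        apply Finset.filter_congr
        intro p _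
        simp [and_self]
      · rw [if_neg hyx]
        exact cardB m n hm hn x y (fun h => hyx (h ▸ rfl))
    rw [Finset.sum_congr rfl hy]
    rw [← Finset.add_sum_erase S _ hx, if_pos rfl]
    congr 1
    have : ∀ y ∈ S.erase x, (if y = x then 2 ^ (m + n - 1) else 2 ^ (n - 1)) = 2 ^ (n - 1) := by
      intro y hy'
      rw [if_neg (Finset.ne_of_mem_erase hy')]
    rw [Finset.sum_congr rfl this, Finset.sum_const, smul_eq_mul,
      Finset.card_erase_of_mem hx]
  rw [Finset.sum_congr rfl inner, Finset.sum_const, smul_eq_mul]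
  ring


end ToepAux

/-- If `|S| ≥ 2^(m+6)`, then the fraction of pairs `(t, b)` with
`c_{t,b}(S) < 48` is at most `2^(m+4) / |S|`, and in particular at most
`1/4`. -/

theorem toeplitz_large_set_rarely_small (m n : ℕ) (hm : 1 ≤ m) (hn : 1 ≤ n)
    (S : Finset (Fin n → ZMod 2)) (hS : 2 ^ (m + 6) ≤ S.card) :
    ((Finset.univ.filter
        (fun p : (Fin (m + n - 1) → ZMod 2) × (Fin m → ZMod 2) =>
          (S.filter (fun x => hashTB m n p.1 p.2 x = 0)).card < 48)).card : ℝ)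
        / 2 ^ (n + 2 * m - 1)
      ≤ 2 ^ (m + 4) / (S.card : ℝ) ∧
    ((Finset.univ.filter
        (fun p : (Fin (m + n - 1) → ZMod 2) × (Fin m → ZMod 2) =>
          (S.filter (fun x => hashTB m n p.1 p.2 x = 0)).card < 48)).card : ℝ)
        / 2 ^ (n + 2 * m - 1)
      ≤ 1 / 4 := by
  classical
  obtain ⟨n, rfl⟩ : ∃ n', n = n' + 1 := ⟨n - 1, by omega⟩
  set f : (Fin (m + (n + 1) - 1) → ZMod 2) × (Fin m → ZMod 2) → ℕ :=
    fun p => (S.filter (fun x => hashTB m (n + 1) p.1 p.2 x = 0)).card with hf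
  have he1 : m + (n + 1) - 1 = m + n := by omega
  have he2 : (n + 1) + 2 * m - 1 = n + 2 * m := by omega
  have he3 : (n + 1) - 1 = n := by omega
  -- basic positivity
  have hP2m : (0:ℝ) < 2 ^ m := by positivity
  have hP2n : (0:ℝ) < 2 ^ n := by positivity
  have hc1 : 1 ≤ S.card := le_trans (Nat.one_le_two_pow) hS
  have ha0 : (0:ℝ) < (S.card : ℝ) := by exact_mod_cast hc1
  set a : ℝ := (S.card : ℝ) with hadef
  have hp1 : (2:ℝ)^(m+(n+1)-1) = 2^m * 2^n := by rw [he1, pow_add]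
  have hp2 : (2:ℝ)^((n+1)+2*m-1) = 2^n * (2^m * 2^m) := by
    rw [he2, pow_add, two_mul, pow_add]
  have hp3 : (2:ℝ)^((n+1)-1) = 2^n := by rw [he3]
  have haS : (2:ℝ) ^ m * 64 ≤ a := by
    have h : ((2:ℕ) ^ (m + 6) : ℝ) ≤ a := by rw [hadef]; exact_mod_cast hS
    calc (2:ℝ)^m * 64 = ((2:ℕ))^(m+6) := by push_cast [pow_add]; norm_num

    _ ≤ a := by exact_mod_cast h
  have hs1 : ∑ p, (f p : ℝ) = a * (2 ^ m * 2 ^ n) := by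
    rw [← Nat.cast_sum, ToepAux.sum1 m (n + 1) S]
    push_cast
    rw [hp1]
  have hs2 : ∑ p, (f p : ℝ) ^ 2
      = a * (2 ^ m * 2 ^ n) + a * (a - 1) * 2 ^ n := by
    have h := ToepAux.sum2 m (n + 1) hm hn S
    have hcast : ((∑ p, (f p) ^ 2 : ℕ) : ℝ) = ∑ p, (f p : ℝ) ^ 2 := by push_cast; rfl
    rw [← hcast, h]
    push_cast [Nat.cast_sub hc1]
    rw [hp1]
  -- cardinality of parameter space
  have hcardP : ((Fintype.card
      ((Fin (m + (n + 1) - 1) → ZMod 2) × (Fin m → ZMod 2)) : ℕ) : ℝ)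
      = 2 ^ n * (2 ^ m * 2 ^ m) := by
    rw [Fintype.card_prod, Fintype.card_fun, Fintype.card_fun]
    push_cast [ZMod.card, Fintype.card_fin]
    rw [hp1]
    ring
  -- second moment of the scaled deviation
  have hG : ∑ p, ((2:ℝ) ^ m * (f p : ℝ) - a) ^ 2
      ≤ a * (2 ^ m * (2 ^ m * (2 ^ m * 2 ^ n))) := by
    have hexp : ∀ p : (Fin (m + (n + 1) - 1) → ZMod 2) × (Fin m → ZMod 2),
        ((2:ℝ) ^ m * (f p : ℝ) - a) ^ 2
        = (2 ^ m * 2 ^ m) * (f p : ℝ) ^ 2 - 2 * a * 2 ^ m * (f p : ℝ) + a ^ 2 := by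
      intro p; ring
    rw [Finset.sum_congr rfl (fun p _ => hexp p), Finset.sum_add_distrib,
      Finset.sum_sub_distrib, ← Finset.mul_sum, ← Finset.mul_sum, hs1, hs2,
      Finset.sum_const, nsmul_eq_mul, Finset.card_univ, hcardP]
    nlinarith [mul_pos (mul_pos ha0 (mul_pos hP2m hP2m)) hP2n]
  -- bad pairs
  set Bad := (Finset.univ.filter
      (fun p : (Fin (m + (n + 1) - 1) → ZMod 2) × (Fin m → ZMod 2) =>
        (S.filter (fun x => hashTB m (n + 1) p.1 p.2 x = 0)).card < 48)) with hBad
  have hBadlow : ∀ p ∈ Bad, a ^ 2 / 16 ≤ ((2:ℝ) ^ m * (f p : ℝ) - a) ^ 2 := by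
    intro p hp
    rw [hBad, Finset.mem_filter] at hp
    have h47 : f p < 48 := hp.2
    have hfp : (f p : ℝ) ≤ 47 := by exact_mod_cast Nat.lt_succ_iff.mp h47
    have hfp0 : (0:ℝ) ≤ (f p : ℝ) := Nat.cast_nonneg _
    have h1 : (2:ℝ) ^ m * (f p : ℝ) ≤ 2 ^ m * 47 :=
      mul_le_mul_of_nonneg_left hfp (le_of_lt hP2m)
    have hd : a / 4 ≤ a - (2:ℝ) ^ m * (f p : ℝ) := by linarith
    have hd4 : (0:ℝ) ≤ a / 4 := by positivity
    have hsq := mul_le_mul hd hd hd4 (by linarith)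
    nlinarith [hsq]
  have hB1 : (Bad.card : ℝ) * (a ^ 2 / 16) ≤ a * (2 ^ m * (2 ^ m * (2 ^ m * 2 ^ n))) := by
    calc (Bad.card : ℝ) * (a ^ 2 / 16)
        = ∑ _p ∈ Bad, (a ^ 2 / 16) := by rw [Finset.sum_const, nsmul_eq_mul]
      _ ≤ ∑ p ∈ Bad, ((2:ℝ) ^ m * (f p : ℝ) - a) ^ 2 := Finset.sum_le_sum hBadlow
      _ ≤ ∑ p, ((2:ℝ) ^ m * (f p : ℝ) - a) ^ 2 :=
          Finset.sum_le_sum_of_subset_of_nonneg (Finset.subset_univ _)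
            (fun p _ _ => sq_nonneg _)
      _ ≤ a * (2 ^ m * (2 ^ m * (2 ^ m * 2 ^ n))) := hG
  have hB2 : (Bad.card : ℝ) * a ≤ 16 * (2 ^ m * (2 ^ m * (2 ^ m * 2 ^ n))) := by
    have h' : ((Bad.card : ℝ) * a) * (a / 16)
        ≤ (16 * (2 ^ m * (2 ^ m * (2 ^ m * 2 ^ n)))) * (a / 16) := by linarith [hB1]
    exact le_of_mul_le_mul_right h' (by positivity)
  have hNpos : (0:ℝ) < 2 ^ ((n+1) + 2*m - 1) := by positivity
  have goal1 : ((Bad.card : ℝ)) / 2 ^ ((n+1) + 2*m - 1) ≤ 2 ^ (m + 4) / a := by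
    rw [div_le_div_iff₀ hNpos ha0, hp2]
    have h16 : (2:ℝ) ^ (m + 4) = 2 ^ m * 16 := by rw [pow_add]; norm_num
    rw [h16]
    refine le_trans hB2 (le_of_eq ?_)
    ring
  refine ⟨goal1, le_trans goal1 ?_⟩
  rw [div_le_div_iff₀ ha0 (by norm_num : (0:ℝ) < 4)]
  have h64 : (2:ℝ) ^ (m + 4) * 4 = 2 ^ m * 64 := by rw [pow_add]; ring
  linarith [haS]
end

section
/- Let m, n ≥ 1 with m + 5 ≤ n, and let S ⊆ 𝔽₂ⁿ satisfy |S| ≤ 2^{m+5}. For (t, b) ∈ 𝔽₂^{m+n−1} × 𝔽₂ᵐ write c_{t,b}(S) = |{x ∈ S : h_{t,b}(x) = 0^m}|. Then the fraction of pairs (t, b) with c_{t,b}(S) ≥ 48 is at most 1/8. -/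
set_option maxRecDepth 4000

open Finset


lemma toeplitz_mulVec (m n : ℕ) (t : Fin (m + n - 1) → ZMod 2)
    (z : Fin n → ZMod 2) (i : Fin m) :
    (toeplitz m n t).mulVec z i
      = ∑ j : Fin n, t ⟨i.val + (n - 1) - j.val, by
          have hi := i.isLt; have hj := j.isLt; omega⟩ * z j := by
  simp [Matrix.mulVec, dotProduct, toeplitz]

lemma zmod2_ne_zero {a : ZMod 2} (h : a ≠ 0) : a = 1 := by
  revert h; revert a; decide

lemma toeplitz_ker_card_le (m n : ℕ) (hm : 1 ≤ m) (hn : 1 ≤ n)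
    (z : Fin n → ZMod 2) (hz : z ≠ 0) :
    (Finset.univ.filter (fun t : Fin (m + n - 1) → ZMod 2 =>
        (toeplitz m n t).mulVec z = 0)).card ≤ 2 ^ (n - 1) := by
  classical
  have hJ : (Finset.univ.filter fun j : Fin n => z j ≠ 0).Nonempty := by
    rcases Function.ne_iff.mp hz with ⟨j, hj⟩
    exact ⟨j, by simpa using hj⟩
  set j0 := (Finset.univ.filter fun j : Fin n => z j ≠ 0).max' hJ with hj0def
  have hz0 : z j0 ≠ 0 := by
    have := Finset.max'_mem _ hJ
    simpa [hj0def] using (Finset.mem_filter.mp this).2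
  have hmax : ∀ j : Fin n, z j ≠ 0 → j ≤ j0 := fun j hj =>
    Finset.le_max' _ _ (by simpa using hj)
  have hj0lt : (j0 : ℕ) < n := j0.isLt
  -- special indices
  let idx : Fin m → Fin (m + n - 1) := fun i =>
    ⟨i.val + (n - 1) - j0.val, by have := i.isLt; omega⟩
  have idx_inj : Function.Injective idx := by
    intro a b hab
    have := congrArg Fin.val hab
    simp only [idx] at this
    have ha := a.isLt; have hb := b.isLt
    exact Fin.ext (by omega)
  let Sp : Finset (Fin (m + n - 1)) := Finset.image idx Finset.univ
  have hSpcard : Sp.card = m := by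
    simp [Sp, Finset.card_image_of_injective _ idx_inj]
  -- key induction
  have key : ∀ u : Fin (m + n - 1) → ZMod 2,
      (toeplitz m n u).mulVec z = 0 →
      (∀ k : Fin (m + n - 1), k ∉ Sp → u k = 0) →
      ∀ s : ℕ, ∀ k : Fin (m + n - 1), (m + n - 1) - k.val ≤ s → u k = 0 := by
    intro u hker hoff s
    induction s with
    | zero => intro k hk; exact absurd hk (by have := k.isLt; omega)
    | succ s ih =>
      intro k hk
      by_cases hksp : k ∈ Sp
      · obtain ⟨i, -, hi⟩ := Finset.mem_image.mp hksp
        have hival : i.val + (n - 1) - j0.val = k.val := congrArg Fin.val hi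
        have hrow := congrFun hker i
        rw [toeplitz_mulVec] at hrow
        rw [Finset.sum_eq_single j0] at hrow
        · -- u k * z j0 = 0
          have hidx : (⟨i.val + (n - 1) - j0.val, by have := i.isLt; omega⟩ : Fin (m+n-1)) = k :=
            Fin.ext hival
          rw [hidx, zmod2_ne_zero hz0, mul_one] at hrow
          simpa using hrow
        · intro b _ hb
          rcases lt_or_gt_of_ne hb with hlt | hgt
          · -- b < j0 : index bigger than k, use ih
            have hbig : k.val < i.val + (n - 1) - b.val := by
              have hb' : (b:ℕ) < j0 := hlt
              omega
            have := ih ⟨i.val + (n - 1) - b.val, by have := i.isLt; have := b.isLt; omega⟩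
              (by simp only []; omega)
            rw [this, zero_mul]
          · -- j0 < b : z b = 0
            have : z b = 0 := by
              by_contra hzb
              exact absurd (hmax b hzb) (not_le.mpr hgt)
            rw [this, mul_zero]
        · intro h; exact absurd (Finset.mem_univ j0) h
      · exact hoff k hksp
  -- injection into functions on the complement
  let F : (Fin (m + n - 1) → ZMod 2) → ({k : Fin (m+n-1) // k ∉ Sp} → ZMod 2) :=
    fun t k => t k.val
  have hinj : Set.InjOn F ((Finset.univ.filter (fun t : Fin (m + n - 1) → ZMod 2 =>
      (toeplitz m n t).mulVec z = 0)) : Finset _) := by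
    intro t ht t' ht' hF
    simp only [Finset.coe_filter, Set.mem_setOf_eq, Finset.mem_univ, true_and] at ht ht'
    have hker : (toeplitz m n (t - t')).mulVec z = 0 := by
      have hsub : toeplitz m n (t - t') = toeplitz m n t - toeplitz m n t' := by
        ext i j; simp [toeplitz]
      rw [hsub, Matrix.sub_mulVec, ht, ht', sub_zero]
    have hoff : ∀ k : Fin (m + n - 1), k ∉ Sp → (t - t') k = 0 := by
      intro k hk
      have := congrFun hF ⟨k, hk⟩
      simp only [F] at this
      simp [Pi.sub_apply, this]
    funext k
    have := key (t - t') hker hoff (m + n - 1) k (by omega)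
    have := sub_eq_zero.mp (by simpa [Pi.sub_apply] using this)
    exact this
  have hle := Finset.card_le_card_of_injOn F (fun a _ => Finset.mem_univ (F a)) hinj
  calc (Finset.univ.filter (fun t : Fin (m + n - 1) → ZMod 2 =>
        (toeplitz m n t).mulVec z = 0)).card
      ≤ (Finset.univ : Finset ({k : Fin (m+n-1) // k ∉ Sp} → ZMod 2)).card := hle
    _ = 2 ^ (n - 1) := by
        rw [Finset.card_univ, Fintype.card_fun, ZMod.card]
        congr 1
        rw [Fintype.card_subtype]
        have : (Finset.univ.filter (fun k : Fin (m+n-1) => k ∉ Sp)) = Spᶜ := by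
          ext k; simp [Finset.mem_compl]
        rw [this, Finset.card_compl, hSpcard, Fintype.card_fin]
        omega


lemma single_card (m n : ℕ) (x : Fin n → ZMod 2) :
    (Finset.univ.filter (fun p : (Fin (m + n - 1) → ZMod 2) × (Fin m → ZMod 2) =>
        hashTB m n p.1 p.2 x = 0)).card = 2 ^ (m + n - 1) := by
  classical
  rw [Finset.card_bij' (fun p _ => p.1)
    (fun t _ => (t, -(toeplitz m n t).mulVec x))
    (fun p _ => Finset.mem_univ _)
    (fun t _ => by
      refine Finset.mem_filter.mpr ⟨Finset.mem_univ _, ?_⟩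
      simp only [Finset.mem_filter, Finset.mem_univ, true_and, hashTB]
      exact add_neg_cancel _)
    (fun p hp => by
      have hp := Finset.mem_filter.mp hp
      simp only [Finset.mem_filter, Finset.mem_univ, true_and, hashTB] at hp
      have : p.2 = -(toeplitz m n p.1).mulVec x := eq_neg_of_add_eq_zero_right hp
      exact Prod.ext rfl this.symm)
    (fun t _ => rfl)]
  rw [Finset.card_univ, Fintype.card_fun, ZMod.card, Fintype.card_fin]

lemma pair_card_le (m n : ℕ) (hm : 1 ≤ m) (hn : 1 ≤ n)
    (x y : Fin n → ZMod 2) (hxy : x ≠ y) :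
    (Finset.univ.filter (fun p : (Fin (m + n - 1) → ZMod 2) × (Fin m → ZMod 2) =>
        hashTB m n p.1 p.2 x = 0 ∧ hashTB m n p.1 p.2 y = 0)).card ≤ 2 ^ (n - 1) := by
  classical
  have hmaps : ∀ p ∈ (Finset.univ.filter (fun p : (Fin (m + n - 1) → ZMod 2) × (Fin m → ZMod 2) =>
      hashTB m n p.1 p.2 x = 0 ∧ hashTB m n p.1 p.2 y = 0)),
      p.1 ∈ Finset.univ.filter (fun t : Fin (m + n - 1) → ZMod 2 =>
        (toeplitz m n t).mulVec (x - y) = 0) := by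
    intro p hp
    have hp := Finset.mem_filter.mp hp
    simp only [Finset.mem_filter, Finset.mem_univ, true_and, hashTB] at hp ⊢
    rw [Matrix.mulVec_sub]
    have h1 := hp.1; have h2 := hp.2
    have e1 : (toeplitz m n p.1).mulVec x = -p.2 := eq_neg_of_add_eq_zero_left h1
    have e2 : (toeplitz m n p.1).mulVec y = -p.2 := eq_neg_of_add_eq_zero_left h2
    rw [e1, e2, sub_self]
  have hinj : Set.InjOn (fun p : (Fin (m + n - 1) → ZMod 2) × (Fin m → ZMod 2) => p.1)
      ((Finset.univ.filter (fun p : (Fin (m + n - 1) → ZMod 2) × (Fin m → ZMod 2) =>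
        hashTB m n p.1 p.2 x = 0 ∧ hashTB m n p.1 p.2 y = 0)) : Finset _) := by
    intro p hp q hq hpq
    have hp := Finset.mem_filter.mp (Finset.mem_coe.mp hp)
    have hq := Finset.mem_filter.mp (Finset.mem_coe.mp hq)
    simp only [Finset.coe_filter, Set.mem_setOf_eq, Finset.mem_univ, true_and, hashTB] at hp hq
    have ep : p.2 = -(toeplitz m n p.1).mulVec x := eq_neg_of_add_eq_zero_right hp.1
    have eq' : q.2 = -(toeplitz m n q.1).mulVec x := eq_neg_of_add_eq_zero_right hq.1
    have : p.1 = q.1 := hpq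
    exact Prod.ext this (by rw [ep, eq', this])
  calc _ ≤ (Finset.univ.filter (fun t : Fin (m + n - 1) → ZMod 2 =>
        (toeplitz m n t).mulVec (x - y) = 0)).card :=
      Finset.card_le_card_of_injOn _ hmaps hinj
    _ ≤ 2 ^ (n - 1) := toeplitz_ker_card_le m n hm hn _ (sub_ne_zero.mpr hxy)


/-- If `m + 5 ≤ n` and `|S| ≤ 2^(m+5)`, then the fraction of pairs `(t, b)`
with `c_{t,b}(S) ≥ 48` is at most `1/8`. -/
theorem toeplitz_small_set_rarely_large (m n : ℕ) (hm : 1 ≤ m) (hn : 1 ≤ n)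
    (hmn : m + 5 ≤ n)
    (S : Finset (Fin n → ZMod 2)) (hS : S.card ≤ 2 ^ (m + 5)) :
    ((Finset.univ.filter
        (fun p : (Fin (m + n - 1) → ZMod 2) × (Fin m → ZMod 2) =>
          48 ≤ (S.filter (fun x => hashTB m n p.1 p.2 x = 0)).card)).card : ℝ)
        / 2 ^ (n + 2 * m - 1)
      ≤ 1 / 8 := by
  classical
  set K := (Finset.univ.filter
        (fun p : (Fin (m + n - 1) → ZMod 2) × (Fin m → ZMod 2) =>
          48 ≤ (S.filter (fun x => hashTB m n p.1 p.2 x = 0)).card)) with hK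
  set f : (Fin (m + n - 1) → ZMod 2) × (Fin m → ZMod 2) → ℕ :=
    fun p => (S.filter (fun x => hashTB m n p.1 p.2 x = 0)).card with hf
  have fcard : ∀ p : (Fin (m + n - 1) → ZMod 2) × (Fin m → ZMod 2),
      f p = ∑ x ∈ S, (if hashTB m n p.1 p.2 x = 0 then 1 else 0) :=
    fun p => Finset.card_filter _ _
  -- first moment
  have hsum1 : ∑ p : (Fin (m + n - 1) → ZMod 2) × (Fin m → ZMod 2), f p
      = S.card * 2 ^ (m + n - 1) := by
    calc ∑ p : (Fin (m + n - 1) → ZMod 2) × (Fin m → ZMod 2), f p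
        = ∑ p : (Fin (m + n - 1) → ZMod 2) × (Fin m → ZMod 2), ∑ x ∈ S,
            (if hashTB m n p.1 p.2 x = 0 then 1 else 0) :=
          Finset.sum_congr rfl (fun p _ => fcard p)
      _ = ∑ x ∈ S, ∑ p : (Fin (m + n - 1) → ZMod 2) × (Fin m → ZMod 2),
            (if hashTB m n p.1 p.2 x = 0 then 1 else 0) := Finset.sum_comm
      _ = ∑ x ∈ S, (Finset.univ.filter
            (fun p : (Fin (m + n - 1) → ZMod 2) × (Fin m → ZMod 2) =>
              hashTB m n p.1 p.2 x = 0)).card :=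
          Finset.sum_congr rfl (fun x _ => (Finset.card_filter _ _).symm)
      _ = ∑ x ∈ S, 2 ^ (m + n - 1) :=
          Finset.sum_congr rfl (fun x _ => single_card m n x)
      _ = S.card * 2 ^ (m + n - 1) := by rw [Finset.sum_const, smul_eq_mul]
  -- second moment
  have hsum2 : ∑ p : (Fin (m + n - 1) → ZMod 2) × (Fin m → ZMod 2), (f p) ^ 2
      ≤ S.card * 2 ^ (m + n - 1) + S.card * S.card * 2 ^ (n - 1) := by
    have expand : ∀ p : (Fin (m + n - 1) → ZMod 2) × (Fin m → ZMod 2),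
        (f p) ^ 2 = ∑ x ∈ S, ∑ y ∈ S,
          (if hashTB m n p.1 p.2 x = 0 ∧ hashTB m n p.1 p.2 y = 0 then 1 else 0) := by
      intro p
      have : (f p) ^ 2 = (∑ x ∈ S, if hashTB m n p.1 p.2 x = 0 then 1 else 0) *
          (∑ y ∈ S, if hashTB m n p.1 p.2 y = 0 then 1 else 0) := by
        rw [sq, fcard]
      rw [this, Finset.sum_mul_sum]
      refine Finset.sum_congr rfl (fun x _ => Finset.sum_congr rfl (fun y _ => ?_))
      by_cases h1 : hashTB m n p.1 p.2 x = 0 <;>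
        by_cases h2 : hashTB m n p.1 p.2 y = 0 <;> simp [h1, h2]
    calc ∑ p : (Fin (m + n - 1) → ZMod 2) × (Fin m → ZMod 2), (f p) ^ 2
        = ∑ x ∈ S, ∑ y ∈ S, ∑ p : (Fin (m + n - 1) → ZMod 2) × (Fin m → ZMod 2),
            (if hashTB m n p.1 p.2 x = 0 ∧ hashTB m n p.1 p.2 y = 0 then 1 else 0) := by
          simp_rw [expand]
          rw [Finset.sum_comm]
          refine Finset.sum_congr rfl (fun x _ => Finset.sum_comm)
      _ = ∑ x ∈ S, ∑ y ∈ S, (Finset.univ.filter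
            (fun p : (Fin (m + n - 1) → ZMod 2) × (Fin m → ZMod 2) =>
              hashTB m n p.1 p.2 x = 0 ∧ hashTB m n p.1 p.2 y = 0)).card :=
          Finset.sum_congr rfl (fun x _ => Finset.sum_congr rfl
            (fun y _ => (Finset.card_filter _ _).symm))
      _ ≤ ∑ x ∈ S, ∑ y ∈ S,
            ((if y = x then 2 ^ (m + n - 1) else 0) + 2 ^ (n - 1)) := by
          refine Finset.sum_le_sum (fun x hx => Finset.sum_le_sum (fun y hy => ?_))
          by_cases hxy : y = x
          · subst hxy
            simp only [if_pos rfl]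
            calc (Finset.univ.filter
                (fun p : (Fin (m + n - 1) → ZMod 2) × (Fin m → ZMod 2) =>
                  hashTB m n p.1 p.2 y = 0 ∧ hashTB m n p.1 p.2 y = 0)).card
                ≤ (Finset.univ.filter
                  (fun p : (Fin (m + n - 1) → ZMod 2) × (Fin m → ZMod 2) =>
                    hashTB m n p.1 p.2 y = 0)).card := by
                  apply Finset.card_le_card
                  intro p hp
                  simp only [Finset.mem_filter] at hp ⊢
                  exact ⟨hp.1, hp.2.1⟩
              _ = 2 ^ (m + n - 1) := single_card m n y
              _ ≤ 2 ^ (m + n - 1) + 2 ^ (n - 1) := Nat.le_add_right _ _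
          · simp only [if_neg hxy, zero_add]
            exact pair_card_le m n hm hn x y (fun h => hxy h.symm)
      _ = S.card * 2 ^ (m + n - 1) + S.card * S.card * 2 ^ (n - 1) := by
          have inner : ∀ x ∈ S, ∑ y ∈ S,
              ((if y = x then 2 ^ (m + n - 1) else 0) + 2 ^ (n - 1))
              = 2 ^ (m + n - 1) + S.card * 2 ^ (n - 1) := by
            intro x hx
            rw [Finset.sum_add_distrib, Finset.sum_const, smul_eq_mul,
              Finset.sum_ite_eq' S x, if_pos hx]
          rw [Finset.sum_congr rfl inner, Finset.sum_const, smul_eq_mul]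
          ring
  -- real part
  have hMpos : (0:ℝ) < 2 ^ m := by positivity
  set a : ℝ := (S.card : ℝ) with ha
  set B : ℝ := (2:ℝ) ^ (n - 1) with hB
  set M : ℝ := (2:ℝ) ^ m with hM
  set μ : ℝ := a / M with hμ
  have hμM : μ * M = a := div_mul_cancel₀ _ (ne_of_gt hMpos)
  have hμ0 : 0 ≤ μ := by positivity
  have hcast : a ≤ 2 ^ (m + 5) := by rw [ha]; exact_mod_cast hS
  have hμ32 : μ ≤ 32 := by
    rw [hμ, div_le_iff₀ hMpos]
    calc a ≤ 2 ^ (m + 5) := hcast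
      _ = 32 * M := by rw [hM, pow_add]; ring
  have hA : (2:ℝ) ^ (m + n - 1) = B * M := by
    rw [hB, hM, ← pow_add]
    congr 1
    omega
  have cheb : 256 * (K.card : ℝ) ≤
      ∑ p : (Fin (m + n - 1) → ZMod 2) × (Fin m → ZMod 2), ((f p : ℝ) - μ) ^ 2 := by
    calc 256 * (K.card : ℝ) = ∑ _p ∈ K, (256:ℝ) := by
          rw [Finset.sum_const, nsmul_eq_mul, mul_comm]
      _ ≤ ∑ p ∈ K, ((f p : ℝ) - μ) ^ 2 := by
          refine Finset.sum_le_sum (fun p hp => ?_)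
          rw [hK] at hp
          have h48 : (48:ℕ) ≤ f p := (Finset.mem_filter.mp hp).2
          have h48' : (48:ℝ) ≤ (f p : ℝ) := by exact_mod_cast h48
          have h16 : (16:ℝ) ≤ (f p : ℝ) - μ := by linarith
          calc (256:ℝ) = 16 ^ 2 := by norm_num
            _ ≤ ((f p : ℝ) - μ) ^ 2 := by nlinarith
      _ ≤ ∑ p : (Fin (m + n - 1) → ZMod 2) × (Fin m → ZMod 2), ((f p : ℝ) - μ) ^ 2 :=
          Finset.sum_le_sum_of_subset_of_nonneg (Finset.filter_subset _ _)
            (fun p _ _ => sq_nonneg _)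
  have hcardP : ((Finset.univ :
      Finset ((Fin (m + n - 1) → ZMod 2) × (Fin m → ZMod 2))).card : ℝ) = B * M * M := by
    rw [Finset.card_univ, Fintype.card_prod, Fintype.card_fun, Fintype.card_fun,
      ZMod.card, Fintype.card_fin, Fintype.card_fin]
    push_cast
    all_goals rw [← hA]
    all_goals push_cast
    all_goals ring
  have hs1R : ∑ p : (Fin (m + n - 1) → ZMod 2) × (Fin m → ZMod 2), (f p : ℝ)
      = a * (B * M) := by
    rw [← Nat.cast_sum, hsum1]
    push_cast
    all_goals rw [← hA, ha]
    all_goals ring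
  have hs2R : ∑ p : (Fin (m + n - 1) → ZMod 2) × (Fin m → ZMod 2), (f p : ℝ) ^ 2
      ≤ a * (B * M) + a * a * B := by
    have h := hsum2
    have h' : ((∑ p : (Fin (m + n - 1) → ZMod 2) × (Fin m → ZMod 2), (f p) ^ 2 : ℕ) : ℝ)
        ≤ ((S.card * 2 ^ (m + n - 1) + S.card * S.card * 2 ^ (n - 1) : ℕ) : ℝ) := by
      exact_mod_cast h
    push_cast at h'
    rw [hA, ← hB] at h'
    rw [ha]
    exact h'
  have expand2 : ∑ p : (Fin (m + n - 1) → ZMod 2) × (Fin m → ZMod 2), ((f p : ℝ) - μ) ^ 2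
      = (∑ p : (Fin (m + n - 1) → ZMod 2) × (Fin m → ZMod 2), (f p : ℝ) ^ 2)
        - 2 * μ * (∑ p : (Fin (m + n - 1) → ZMod 2) × (Fin m → ZMod 2), (f p : ℝ))
        + (B * M * M) * μ ^ 2 := by
    have hpt : ∀ p : (Fin (m + n - 1) → ZMod 2) × (Fin m → ZMod 2),
        ((f p : ℝ) - μ) ^ 2 = (f p : ℝ) ^ 2 - 2 * μ * (f p : ℝ) + μ ^ 2 := fun p => by ring
    simp_rw [hpt]
    rw [Finset.sum_add_distrib, Finset.sum_sub_distrib, ← Finset.mul_sum,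
      Finset.sum_const, nsmul_eq_mul, hcardP]
  have h2 : 2 * μ * (a * (B * M)) = 2 * (a * a) * B := by rw [← hμM]; ring
  have h3 : (B * M * M) * μ ^ 2 = (a * a) * B := by rw [← hμM]; ring
  have hvar : ∑ p : (Fin (m + n - 1) → ZMod 2) × (Fin m → ZMod 2), ((f p : ℝ) - μ) ^ 2
      ≤ a * (B * M) := by
    rw [expand2, hs1R]
    linarith [hs2R]
  have hfin : 256 * (K.card : ℝ) ≤ 32 * 2 ^ (n + 2 * m - 1) := by
    have hstep : a * (B * M) ≤ 32 * 2 ^ (n + 2 * m - 1) := by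
      calc a * (B * M) ≤ 2 ^ (m + 5) * (B * M) :=
            mul_le_mul_of_nonneg_right hcast (by positivity)
        _ = 32 * 2 ^ (n + 2 * m - 1) := by
            rw [hB, hM, ← pow_add, ← pow_add]
            rw [show (32:ℝ) = 2 ^ 5 by norm_num, ← pow_add]
            congr 1
            omega
    linarith [cheb, hvar]
  rw [div_le_div_iff₀ (by positivity) (by norm_num : (0:ℝ) < 8)]
  linarith
end

section
/- (Output amplitudes of the IQP-plus-Boolean-circuit model.) Let n ≥ 1, let g : 𝔽₂ⁿ → 𝔽₂ and h : 𝔽₂ⁿ → ℝ be functions, let f : 𝔽₂ⁿ → 𝔽₂ be an n-variable degree-2 polynomial over 𝔽₂, and let V be a unitary 2^{n+1} × 2^{n+1} complex matrix, indexed by 𝔽₂ⁿ × 𝔽₂, such that V·e_{(x,0)} = e^{i h(x)}·e_{(x, g(x))} for every x ∈ 𝔽₂ⁿ. Let Z̄ = I_{2ⁿ} ⊗ Z, where Z is the diagonal 2×2 matrix diag(1, −1) acting on the last qubit. Then the vector w = (H_n ⊗ I₂)·(D_f ⊗ I₂)·V†·Z̄·V·(H_n ⊗ I₂)·e_{(0ⁿ,0)}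 satisfies w_{(z,0)} = gap((f+g)_z)/2ⁿ and w_{(z,1)} = 0 for every z ∈ 𝔽₂ⁿ; consequently, measuring the first n qubits yields outcome z with probability p_z(f+g) = gap((f+g)_z)²/2^{2n}. -/
/-- `gap F = Σ_{x ∈ 𝔽₂ⁿ} (−1)^{F(x)}`. -/
def gap {n : ℕ} (F : (Fin n → ZMod 2) → ZMod 2) : ℤ :=
  ∑ x : Fin n → ZMod 2, if F x = 0 then 1 else -1

/-- The matrix `H_n` with entries `(H_n)_{x,y} = (−1)^{x·y} / 2^{n/2}`. -/
noncomputable def Hmat (n : ℕ) :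
    Matrix (Fin n → ZMod 2) (Fin n → ZMod 2) ℂ :=
  Matrix.of fun x y =>
    (if (∑ i, x i * y i : ZMod 2) = 0 then 1 else -1) / (Real.sqrt 2 : ℂ) ^ n

/-- The diagonal matrix `D_F` with entries `(D_F)_{x,x} = (−1)^{F(x)}`. -/
noncomputable def Dmat {n : ℕ} (F : (Fin n → ZMod 2) → ZMod 2) :
    Matrix (Fin n → ZMod 2) (Fin n → ZMod 2) ℂ :=
  Matrix.diagonal fun x => if F x = 0 then 1 else -1

open Matrix

/-- The single-qubit gate `Z = diag(1, −1)`, indexed by `𝔽₂`. -/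
noncomputable def Zone : Matrix (ZMod 2) (ZMod 2) ℂ :=
  Matrix.diagonal fun a => if a = 0 then 1 else -1

/-- The output vector
`w = (H_n ⊗ I₂)·(D_f ⊗ I₂)·V†·(I ⊗ Z)·V·(H_n ⊗ I₂)·e_{(0ⁿ,0)}`
of the IQP-plus-Boolean-circuit model. -/
noncomputable def outVec (n : ℕ) (f : (Fin n → ZMod 2) → ZMod 2)
    (V : Matrix ((Fin n → ZMod 2) × ZMod 2) ((Fin n → ZMod 2) × ZMod 2) ℂ) :
    ((Fin n → ZMod 2) × ZMod 2) → ℂ :=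
  ((Matrix.kroneckerMap (· * ·) (Hmat n) (1 : Matrix (ZMod 2) (ZMod 2) ℂ)) *
   (Matrix.kroneckerMap (· * ·) (Dmat f) (1 : Matrix (ZMod 2) (ZMod 2) ℂ)) *
   Vᴴ *
   (Matrix.kroneckerMap (· * ·)
      (1 : Matrix (Fin n → ZMod 2) (Fin n → ZMod 2) ℂ) Zone) *
   V *
   (Matrix.kroneckerMap (· * ·) (Hmat n) (1 : Matrix (ZMod 2) (ZMod 2) ℂ))).mulVec
    (Pi.single ((0 : Fin n → ZMod 2), (0 : ZMod 2)) 1)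

/- ### Auxiliary material -/

noncomputable def Akr (n : ℕ) :
    Matrix ((Fin n → ZMod 2) × ZMod 2) ((Fin n → ZMod 2) × ZMod 2) ℂ :=
  Matrix.kroneckerMap (· * ·) (Hmat n) (1 : Matrix (ZMod 2) (ZMod 2) ℂ)

noncomputable def Bkr {n : ℕ} (f : (Fin n → ZMod 2) → ZMod 2) :
    Matrix ((Fin n → ZMod 2) × ZMod 2) ((Fin n → ZMod 2) × ZMod 2) ℂ :=
  Matrix.kroneckerMap (· * ·) (Dmat f) (1 : Matrix (ZMod 2) (ZMod 2) ℂ)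

noncomputable def Ckr (n : ℕ) :
    Matrix ((Fin n → ZMod 2) × ZMod 2) ((Fin n → ZMod 2) × ZMod 2) ℂ :=
  Matrix.kroneckerMap (· * ·)
    (1 : Matrix (Fin n → ZMod 2) (Fin n → ZMod 2) ℂ) Zone

lemma outVec_eq (n : ℕ) (f : (Fin n → ZMod 2) → ZMod 2)
    (V : Matrix ((Fin n → ZMod 2) × ZMod 2) ((Fin n → ZMod 2) × ZMod 2) ℂ) :
    outVec n f V =
      (Akr n * Bkr f * Vᴴ * Ckr n * V * Akr n).mulVec
        (Pi.single ((0 : Fin n → ZMod 2), (0 : ZMod 2)) 1) := rfl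

lemma mulVec_finsum {m l ι : Type*} [Fintype l] [Fintype ι]
    (M : Matrix m l ℂ) (u : ι → l → ℂ) :
    M.mulVec (∑ i, u i) = ∑ i, M.mulVec (u i) := by
  simp only [← Matrix.mulVecLin_apply]
  exact map_sum (M.mulVecLin) u Finset.univ

lemma sign_add (a b : ZMod 2) :
    (if a + b = 0 then (1:ℂ) else -1) =
      (if a = 0 then 1 else -1) * (if b = 0 then 1 else -1) := by
  fin_cases a <;> fin_cases b <;>
    simp [show (1+1 : ZMod 2) = 0 from rfl, show (1 : ZMod 2) ≠ 0 from by decide] <;> split_ifs <;> simp_all <;> contradiction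

lemma gap_cast {n : ℕ} (F : (Fin n → ZMod 2) → ZMod 2) :
    ((gap F : ℤ) : ℂ) = ∑ x, (if F x = 0 then (1:ℂ) else -1) := by
  rw [gap]
  push_cast [apply_ite (fun t : ℤ => (t : ℂ))]
  rfl

/-- Output amplitudes of the IQP-plus-Boolean-circuit model: if the unitary
`V` computes the Boolean function `g` (with phase `h`) as
`V e_{(x,0)} = e^{i h(x)} e_{(x, g(x))}`, and `f` is a degree-2 polynomial
over `𝔽₂`, then the vector
`w = (H_n ⊗ I₂)·(D_f ⊗ I₂)·V†·(I ⊗ Z)·V·(H_n ⊗ I₂)·e_{(0ⁿ,0)}` satisfies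
`w_{(z,0)} = gap((f+g)_z)/2ⁿ` and `w_{(z,1)} = 0`; consequently measuring the
first `n` qubits yields `z` with probability `gap((f+g)_z)²/2^{2n}`. -/
theorem iqp_plus_boolean_amplitude (n : ℕ) (hn : 1 ≤ n)
    (g : (Fin n → ZMod 2) → ZMod 2) (h : (Fin n → ZMod 2) → ℝ)
    (α : Fin n → ZMod 2) (β : Fin n → Fin n → ZMod 2)
    (f : (Fin n → ZMod 2) → ZMod 2)
    (hf : ∀ x, f x = (∑ i, α i * x i) +
      ∑ p ∈ Finset.univ.filter (fun p : Fin n × Fin n => p.2 < p.1),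
        β p.1 p.2 * (x p.1 * x p.2))
    (V : Matrix ((Fin n → ZMod 2) × ZMod 2) ((Fin n → ZMod 2) × ZMod 2) ℂ)
    (hV₁ : Vᴴ * V = 1) (hV₂ : V * Vᴴ = 1)
    (hVact : ∀ x : Fin n → ZMod 2,
      V.mulVec (Pi.single (x, (0 : ZMod 2)) 1) =
        Complex.exp (Complex.I * (h x : ℂ)) •
          (Pi.single (x, g x) 1 : ((Fin n → ZMod 2) × ZMod 2) → ℂ)) :
    ∀ z : Fin n → ZMod 2,
      outVec n f V (z, 0) =
        ((gap (fun x => (f x + g x) + ∑ i, z i * x i) : ℤ) : ℂ) / 2 ^ n ∧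
      outVec n f V (z, 1) = 0 ∧
      ‖outVec n f V (z, 0)‖ ^ 2
          + ‖outVec n f V (z, 1)‖ ^ 2 =
        ((gap (fun x => (f x + g x) + ∑ i, z i * x i) : ℝ)) ^ 2
          / 2 ^ (2 * n) := by
  classical
  set c : ℂ := ((Real.sqrt 2 : ℂ) ^ n)⁻¹ with hcdef
  have hsq : ((Real.sqrt 2 : ℝ) : ℂ) * ((Real.sqrt 2 : ℝ) : ℂ) = 2 := by
    norm_cast
    rw [Real.mul_self_sqrt (by norm_num)]
  have hcc : c * c = ((2 : ℂ) ^ n)⁻¹ := by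
    rw [hcdef, ← mul_inv, ← mul_pow, hsq]
  -- Step 1 : first Hadamard layer
  have step1 : (Akr n).mulVec (Pi.single ((0 : Fin n → ZMod 2), (0 : ZMod 2)) 1)
      = ∑ x : Fin n → ZMod 2,
          c • (Pi.single (x, (0:ZMod 2)) 1 : ((Fin n → ZMod 2) × ZMod 2) → ℂ) := by
    funext p
    obtain ⟨y, b⟩ := p
    have hH : Hmat n y 0 = c := by simp [Hmat, hcdef, div_eq_mul_inv]
    simp only [Akr, Matrix.mulVec_single_one, Matrix.col_apply, mul_one, Matrix.kroneckerMap_apply,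
      Finset.sum_apply, Pi.smul_apply, Pi.single_apply, smul_eq_mul, Prod.mk.injEq]
    rw [hH]
    by_cases hb : b = 0
    · subst hb; simp [Matrix.one_apply, Prod.ext_iff]
    · simp [Matrix.one_apply, hb, Prod.ext_iff]
  -- Step C : the Z gate on the last qubit
  have stepC : ∀ x : Fin n → ZMod 2,
      (Ckr n).mulVec (Pi.single (x, g x) 1 : ((Fin n → ZMod 2) × ZMod 2) → ℂ)
        = (if g x = 0 then (1:ℂ) else -1) •
            (Pi.single (x, g x) 1 : ((Fin n → ZMod 2) × ZMod 2) → ℂ) := by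
    intro x
    funext p
    obtain ⟨y, a⟩ := p
    simp only [Ckr, Matrix.mulVec_single, mul_one, Matrix.kroneckerMap_apply,
      Pi.smul_apply, Pi.single_apply, smul_eq_mul, Zone, Matrix.diagonal_apply,
      Matrix.one_apply, Prod.ext_iff, Prod.mk.injEq]
    by_cases hy : y = x <;> by_cases ha : a = g x <;> simp [hy, ha]
  -- Step V† : it undoes V
  have stepVd : ∀ x : Fin n → ZMod 2,
      Vᴴ.mulVec (Pi.single (x, g x) 1 : ((Fin n → ZMod 2) × ZMod 2) → ℂ)
        = Complex.exp (-(Complex.I * (h x : ℂ))) •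
            (Pi.single (x, (0:ZMod 2)) 1 : ((Fin n → ZMod 2) × ZMod 2) → ℂ) := by
    intro x
    have h1 := congrArg (fun v => Vᴴ.mulVec v) (hVact x)
    simp only [Matrix.mulVec_mulVec, hV₁, Matrix.one_mulVec, Matrix.mulVec_smul] at h1
    rw [Complex.exp_neg]
    exact ((inv_smul_eq_iff₀ (Complex.exp_ne_zero _)).2 h1).symm
  -- Step B : the diagonal phase
  have stepB : ∀ x : Fin n → ZMod 2,
      (Bkr f).mulVec (Pi.single (x, (0:ZMod 2)) 1 : ((Fin n → ZMod 2) × ZMod 2) → ℂ)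
        = (if f x = 0 then (1:ℂ) else -1) •
            (Pi.single (x, (0:ZMod 2)) 1 : ((Fin n → ZMod 2) × ZMod 2) → ℂ) := by
    intro x
    funext p
    obtain ⟨y, a⟩ := p
    simp only [Bkr, Matrix.mulVec_single, mul_one, Matrix.kroneckerMap_apply,
      Pi.smul_apply, Pi.single_apply, smul_eq_mul, Dmat, Matrix.diagonal_apply,
      Matrix.one_apply, Prod.ext_iff, Prod.mk.injEq]
    by_cases hy : y = x <;> by_cases ha : a = (0 : ZMod 2) <;> simp [hy, ha]
  -- Assemble
  have hw : outVec n f V = ∑ x : Fin n → ZMod 2,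
      (c * ((if g x = 0 then (1:ℂ) else -1) * (if f x = 0 then (1:ℂ) else -1))) •
        (Akr n).mulVec (Pi.single (x, (0:ZMod 2)) 1) := by
    rw [outVec_eq]
    simp only [← Matrix.mulVec_mulVec]
    rw [step1]
    rw [mulVec_finsum]; simp only [Matrix.mulVec_smul, hVact]
    rw [mulVec_finsum]; simp only [Matrix.mulVec_smul, stepC]
    rw [mulVec_finsum]; simp only [Matrix.mulVec_smul, stepVd]
    rw [mulVec_finsum]; simp only [Matrix.mulVec_smul, stepB]
    rw [mulVec_finsum]; simp only [Matrix.mulVec_smul]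
    refine Finset.sum_congr rfl fun x _ => ?_
    simp only [smul_smul]
    congr 1
    rw [Complex.exp_neg]
    field_simp
  intro z
  have hw0 : outVec n f V (z, 0) =
      ((gap (fun x => (f x + g x) + ∑ i, z i * x i) : ℤ) : ℂ) / 2 ^ n := by
    rw [gap_cast]
    rw [hw]
    simp only [Finset.sum_apply, Pi.smul_apply, smul_eq_mul, Matrix.mulVec_single_one, Matrix.col_apply,
      mul_one, Akr, Matrix.kroneckerMap_apply]
    rw [Finset.sum_div]
    refine Finset.sum_congr rfl fun x _ => ?_
    have hone : (1 : Matrix (ZMod 2) (ZMod 2) ℂ) 0 0 = 1 := by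
      simp [Matrix.one_apply]
    have hHz : Hmat n z x = (if (∑ i, z i * x i : ZMod 2) = 0 then (1:ℂ) else -1) * c := by
      simp [Hmat, hcdef, div_eq_mul_inv]
    rw [hone, hHz]
    rw [sign_add, sign_add]
    rw [div_eq_mul_inv, ← hcc]
    ring
  have hw1 : outVec n f V (z, 1) = 0 := by
    rw [hw]
    simp only [Finset.sum_apply, Pi.smul_apply, smul_eq_mul, Matrix.mulVec_single,
      mul_one, Akr, Matrix.kroneckerMap_apply]
    have hone : (1 : Matrix (ZMod 2) (ZMod 2) ℂ) 1 0 = 0 := by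
      simp [Matrix.one_apply, show (1 : ZMod 2) ≠ 0 from by decide]
    simp [hone]
  refine ⟨hw0, hw1, ?_⟩
  rw [hw0, hw1]
  simp only [norm_zero, ne_eq, OfNat.ofNat_ne_zero, not_false_eq_true, zero_pow, add_zero,
    norm_div, norm_pow, Complex.norm_two, Complex.norm_intCast]
  rw [div_pow, sq_abs, ← pow_mul, mul_comm n 2]
end

section
/- (Anti-concentration for random degree-3 polynomials.) Let n ≥ 1 and 0 < τ < 1. Choose z ∈ 𝔽₂ⁿ uniformly at random and choose an n-variable degree-3 polynomial f over 𝔽₂ uniformly at random (i.e., all coefficients α_i, β_{i,j}, γ_{i,j,k} uniform and independent in 𝔽₂). Then Pr_{z,f}[ gap(f_z)²/2^{2n} ≥ τ/2ⁿ ] ≥ (1−τ)²/3; equivalently, the number of pairs (z, f) with gap(f_z)² ≥ τ·2ⁿ is at least ((1−τ)²/3)·2ⁿ·|C|, where C is the set of all coefficient tuples. -/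
set_option maxHeartbeats 1000000


/-- The set `C` of coefficient tuples of an `n`-variable degree-3 polynomial
over `𝔽₂`: linear coefficients `α_i`, quadratic coefficients `β_{i,j}` for
`i > j`, and cubic coefficients `γ_{i,j,k}` for `i > j > k`. -/
abbrev Coeff3 (n : ℕ) :=
  (Fin n → ZMod 2) ×
  ({p : Fin n × Fin n // p.2 < p.1} → ZMod 2) ×
  ({t : Fin n × Fin n × Fin n // t.2.2 < t.2.1 ∧ t.2.1 < t.1} → ZMod 2)

/-- The degree-3 polynomial
`f(x) = Σ_i α_i x_i + Σ_{i>j} β_{i,j} x_i x_j + Σ_{i>j>k} γ_{i,j,k} x_i x_j x_k`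
determined by a coefficient tuple. -/
def poly3 {n : ℕ} (c : Coeff3 n) (x : Fin n → ZMod 2) : ZMod 2 :=
  (∑ i, c.1 i * x i) +
  (∑ p : {p : Fin n × Fin n // p.2 < p.1},
    c.2.1 p * (x p.1.1 * x p.1.2)) +
  (∑ t : {t : Fin n × Fin n × Fin n // t.2.2 < t.2.1 ∧ t.2.1 < t.1},
    c.2.2 t * (x t.1.1 * (x t.1.2.1 * x t.1.2.2)))


abbrev V (n : ℕ) := Fin n → ZMod 2

def χ (a : ZMod 2) : ℤ := if a = 0 then 1 else -1

lemma χ_add (a b : ZMod 2) : χ (a + b) = χ a * χ b := by revert a b; decide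

lemma χ_zero : χ 0 = 1 := rfl

lemma zmod2_add_self (a : ZMod 2) : a + a = 0 := by revert a; decide

lemma sum_χ_single : ∀ u : ZMod 2, (∑ b : ZMod 2, χ (b * u)) = if u = 0 then 2 else 0 := by
  decide

lemma χ_sum {ι : Type*} (s : Finset ι) (g : ι → ZMod 2) :
    χ (∑ i ∈ s, g i) = ∏ i ∈ s, χ (g i) := by
  induction s using Finset.cons_induction with
  | empty => simp [χ_zero]
  | cons a s ha ih => rw [Finset.sum_cons, Finset.prod_cons, χ_add, ih]

lemma sum_χ_dot {ι : Type*} [Fintype ι] [DecidableEq ι] (w : ι → ZMod 2) :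
    ∑ c : ι → ZMod 2, χ (∑ i, c i * w i)
      = if w = 0 then (Fintype.card (ι → ZMod 2) : ℤ) else 0 := by
  have h1 : ∀ c : ι → ZMod 2, χ (∑ i, c i * w i) = ∏ i, χ (c i * w i) :=
    fun c => χ_sum _ _
  simp only [h1]
  rw [← Fintype.prod_sum fun i b => χ (b * w i)]
  simp only [sum_χ_single]
  by_cases hw : w = 0
  · simp [hw, Fintype.card_fun]
  · obtain ⟨i, hi⟩ : ∃ i, w i ≠ 0 := by
      by_contra h; push_neg at h; exact hw (funext h)
    rw [if_neg hw]
    exact Finset.prod_eq_zero (Finset.mem_univ i) (by simp [hi])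

lemma gap_eq {n : ℕ} (F : (Fin n → ZMod 2) → ZMod 2) : gap F = ∑ x, χ (F x) := rfl

namespace AC

variable {n : ℕ}

/-- dot product on coefficient tuples -/
def dot (c w : Coeff3 n) : ZMod 2 :=
  (∑ i, c.1 i * w.1 i) + (∑ p, c.2.1 p * w.2.1 p) + (∑ t, c.2.2 t * w.2.2 t)

/-- monomial vector of a point -/
def mv (x : V n) : Coeff3 n :=
  (fun i => x i,
   fun p => x p.1.1 * x p.1.2,
   fun t => x t.1.1 * (x t.1.2.1 * x t.1.2.2))

lemma poly3_eq (c : Coeff3 n) (x : V n) : poly3 c x = dot c (mv x) := rfl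

lemma dot_add (c w w' : Coeff3 n) : dot c (w + w') = dot c w + dot c w' := by
  simp only [dot, Prod.fst_add, Prod.snd_add, Pi.add_apply, mul_add,
    Finset.sum_add_distrib]
  ring

lemma sum_χ_dot3 (w : Coeff3 n) :
    ∑ c : Coeff3 n, χ (dot c w) = if w = 0 then (Fintype.card (Coeff3 n) : ℤ) else 0 := by
  have expand : ∀ c : Coeff3 n, χ (dot c w)
      = χ (∑ i, c.1 i * w.1 i) * (χ (∑ p, c.2.1 p * w.2.1 p) * χ (∑ t, c.2.2 t * w.2.2 t)) := by
    intro c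
    rw [dot, χ_add, χ_add, mul_assoc]
  simp only [expand]
  rw [Fintype.sum_prod_type]
  simp only [Fintype.sum_prod_type]
  simp only [← Finset.mul_sum, ← Finset.sum_mul]
  rw [sum_χ_dot, sum_χ_dot, sum_χ_dot]
  have hw : (w = 0) ↔ (w.1 = 0 ∧ w.2.1 = 0 ∧ w.2.2 = 0) := by
    constructor
    · rintro rfl; exact ⟨rfl, rfl, rfl⟩
    · rintro ⟨h1, h2, h3⟩
      exact Prod.ext h1 (Prod.ext h2 h3)
  have hcard : (Fintype.card (Coeff3 n) : ℤ)
      = (Fintype.card (Fin n → ZMod 2) : ℤ)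
        * ((Fintype.card ({p : Fin n × Fin n // p.2 < p.1} → ZMod 2) : ℤ)
          * (Fintype.card ({t : Fin n × Fin n × Fin n // t.2.2 < t.2.1 ∧ t.2.1 < t.1} → ZMod 2) : ℤ)) := by
    rw [Fintype.card_prod, Fintype.card_prod]; push_cast; ring
  by_cases h0 : w = 0
  · obtain ⟨h1, h2, h3⟩ := hw.mp h0
    rw [if_pos h1, if_pos h2, if_pos h3, if_pos h0, hcard]
  · rw [if_neg h0]
    have : ¬(w.1 = 0 ∧ w.2.1 = 0 ∧ w.2.2 = 0) := fun h => h0 (hw.mpr h)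
    by_cases h1 : w.1 = 0 <;> by_cases h2 : w.2.1 = 0 <;> by_cases h3 : w.2.2 = 0 <;>
      first
      | simp only [if_neg h1, zero_mul, mul_zero]
      | simp only [if_neg h2, zero_mul, mul_zero]
      | simp only [if_neg h3, zero_mul, mul_zero]
      | exact absurd ⟨h1, h2, h3⟩ this

lemma coeff_add_self (w : Coeff3 n) : w + w = 0 := by
  refine Prod.ext ?_ (Prod.ext ?_ ?_) <;> funext i <;> exact zmod2_add_self _

lemma mv_add_eq_zero {x y : V n} : mv x + mv y = 0 ↔ x = y := by
  constructor
  · intro h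
    funext i
    have h1 : x i + y i = 0 := congrFun (congrArg (fun w : Coeff3 n => w.1) h) i
    revert h1
    generalize x i = s; generalize y i = t
    revert s t; decide
  · rintro rfl; exact coeff_add_self _

lemma gap_sq (c : Coeff3 n) :
    (gap (poly3 c)) ^ 2 = ∑ q : V n × V n, χ (dot c (mv q.1 + mv q.2)) := by
  have : ∀ (x y : V n), χ (poly3 c x) * χ (poly3 c y) = χ (dot c (mv x + mv y)) := by
    intro x y
    rw [poly3_eq, poly3_eq, ← χ_add, ← dot_add]
  rw [gap_eq, sq, Finset.sum_mul_sum]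
  simp only [this, Fintype.sum_prod_type]

lemma sum_gap_sq :
    ∑ c : Coeff3 n, (gap (poly3 c)) ^ 2 = 2 ^ n * (Fintype.card (Coeff3 n) : ℤ) := by
  simp only [gap_sq]
  rw [Finset.sum_comm]
  simp only [sum_χ_dot3]
  have : ∀ q : V n × V n, (if mv q.1 + mv q.2 = 0 then (Fintype.card (Coeff3 n) : ℤ) else 0)
      = if q.1 = q.2 then (Fintype.card (Coeff3 n) : ℤ) else 0 := by
    intro q
    simp only [mv_add_eq_zero]
  simp only [this]
  rw [Fintype.sum_prod_type]
  have inner : ∀ x : V n, (∑ y : V n, if x = y then (Fintype.card (Coeff3 n) : ℤ) else 0)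
      = (Fintype.card (Coeff3 n) : ℤ) := by
    intro x
    rw [Finset.sum_ite_eq (Finset.univ) x (fun _ => (Fintype.card (Coeff3 n) : ℤ))]
    simp
  simp only [inner, Finset.sum_const, Finset.card_univ, nsmul_eq_mul]
  have : (Fintype.card (V n) : ℤ) = 2 ^ n := by
    rw [Fintype.card_fun]; simp
  rw [this]

lemma gap_pow4 (c : Coeff3 n) :
    (gap (poly3 c)) ^ 4 = ∑ q : (V n × V n) × (V n × V n),
      χ (dot c ((mv q.1.1 + mv q.1.2) + (mv q.2.1 + mv q.2.2))) := by
  have h4 : (gap (poly3 c)) ^ 4 = ((gap (poly3 c)) ^ 2) ^ 2 := by ring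
  have key : ∀ w w' : Coeff3 n, χ (dot c w) * χ (dot c w') = χ (dot c (w + w')) := by
    intro w w'
    rw [← χ_add, ← dot_add]
  rw [h4, gap_sq, sq, Finset.sum_mul_sum]
  simp only [key, Fintype.sum_prod_type]

lemma d1 : ∀ s t : ZMod 2, t = s + (s + t) := by decide

lemma d2 : ∀ s t w z : ZMod 2, (s + t) + (w + z) = 0 → z = s + ((s + t) + (s + w)) := by decide

lemma d3 : ∀ s t p q r w : ZMod 2,
    (s * t + (s + p) * (t + q)) + ((s + r) * (t + w) + (s + (p + r)) * (t + (q + w))) = 0 →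
    p * w = q * r := by decide

lemma dne : ∀ s : ZMod 2, s ≠ 0 → s = 1 := by decide

lemma pairing {x y u v : V n}
    (h : (mv x + mv y) + (mv u + mv v) = 0) :
    (x = y ∧ u = v) ∨ (x = u ∧ y = v) ∨ (x = v ∧ y = u) := by
  have h1 : ∀ i, (x i + y i) + (u i + v i) = 0 :=
    fun i => congrFun (congrArg (fun w : Coeff3 n => w.1) h) i
  have h2 : ∀ p : {p : Fin n × Fin n // p.2 < p.1},
      (x p.1.1 * x p.1.2 + y p.1.1 * y p.1.2)
        + (u p.1.1 * u p.1.2 + v p.1.1 * v p.1.2) = 0 :=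
    fun p => congrFun (congrArg (fun w : Coeff3 n => w.2.1) h) p
  set a : V n := fun i => x i + y i with ha_def
  set b : V n := fun i => x i + u i with hb_def
  have hy : ∀ i, y i = x i + a i := fun i => d1 (x i) (y i)
  have hu : ∀ i, u i = x i + b i := fun i => d1 (x i) (u i)
  have hv : ∀ i, v i = x i + (a i + b i) := fun i => d2 (x i) (y i) (u i) (v i) (h1 i)
  have hab : ∀ i j : Fin n, a i * b j = a j * b i := by
    have key : ∀ i j, j < i → a i * b j = a j * b i := by
      intro i j hij
      have hq := h2 ⟨(i, j), hij⟩
      simp only at hq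
      rw [hy i, hy j, hu i, hu j, hv i, hv j] at hq
      exact d3 (x i) (x j) (a i) (a j) (b i) (b j) hq
    intro i j
    rcases lt_trichotomy j i with hlt | heq | hgt
    · exact key i j hlt
    · rw [heq]
    · exact (key j i hgt).symm
  have hkey : a = 0 ∨ b = 0 ∨ a = b := by
    by_cases ha : a = 0
    · exact Or.inl ha
    · obtain ⟨i0, hi0⟩ : ∃ i, a i ≠ 0 := by
        by_contra hc; push_neg at hc; exact ha (funext hc)
      have ha1 : a i0 = 1 := dne _ hi0
      by_cases hb : b i0 = 0
      · refine Or.inr (Or.inl ?_)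
        funext j
        have hj := hab i0 j
        rw [ha1, hb, one_mul, mul_zero] at hj
        simpa using hj
      · have hb1 : b i0 = 1 := dne _ hb
        refine Or.inr (Or.inr ?_)
        funext j
        have hj := hab i0 j
        rw [ha1, hb1, one_mul, mul_one] at hj
        exact hj.symm
  rcases hkey with hc | hc | hc
  · refine Or.inl ⟨?_, ?_⟩ <;> funext i
    · have := hy i; rw [hc] at this; simpa using this.symm
    · have h1' := hu i; have h2' := hv i
      rw [hc] at h2'; simp at h2'; rw [h1', h2']
  · refine Or.inr (Or.inl ⟨?_, ?_⟩) <;> funext i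
    · have := hu i; rw [hc] at this; simpa using this.symm
    · have h1' := hy i; have h2' := hv i
      rw [hc] at h2'; simp at h2'; rw [h1', h2']
  · refine Or.inr (Or.inr ⟨?_, ?_⟩) <;> funext i
    · have h2' := hv i
      rw [← hc] at h2'; rw [h2', zmod2_add_self, add_zero]
    · have h1' := hy i; have h2' := hu i
      rw [← hc] at h2'; rw [h1', h2']

lemma card_V : Fintype.card (V n) = 2 ^ n := by
  rw [Fintype.card_fun]; simp

lemma sum_ite_card {α : Type*} [Fintype α] (P : α → Prop) [DecidablePred P] (N : ℤ) :
    (∑ q : α, if P q then N else 0) = ((Finset.univ.filter P).card : ℤ) * N := by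
  rw [← Finset.sum_filter, Finset.sum_const, nsmul_eq_mul]

lemma sum_gap_four_le :
    ∑ c : Coeff3 n, (gap (poly3 c)) ^ 4
      ≤ 3 * ((2 : ℤ) ^ n * 2 ^ n) * (Fintype.card (Coeff3 n) : ℤ) := by
  classical
  simp only [gap_pow4]
  rw [Finset.sum_comm]
  simp only [sum_χ_dot3]
  set N : ℤ := (Fintype.card (Coeff3 n) : ℤ) with hN
  have hN0 : 0 ≤ N := by positivity
  set Q1 : Finset ((V n × V n) × (V n × V n)) :=
    Finset.image (fun r : V n × V n => ((r.1, r.1), (r.2, r.2))) Finset.univ with hQ1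
  set Q2 : Finset ((V n × V n) × (V n × V n)) :=
    Finset.image (fun r : V n × V n => ((r.1, r.2), (r.1, r.2))) Finset.univ with hQ2
  set Q3 : Finset ((V n × V n) × (V n × V n)) :=
    Finset.image (fun r : V n × V n => ((r.1, r.2), (r.2, r.1))) Finset.univ with hQ3
  have hmem : ∀ q : (V n × V n) × (V n × V n),
      (mv q.1.1 + mv q.1.2) + (mv q.2.1 + mv q.2.2) = 0 → q ∈ Q1 ∪ Q2 ∪ Q3 := by
    rintro ⟨⟨x, y⟩, u, v⟩ hPq0
    have hPq : (mv x + mv y) + (mv u + mv v) = 0 := hPq0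
    rcases pairing hPq with ⟨hxy, huv⟩ | ⟨hxu, hyv⟩ | ⟨hxv, hyu⟩
    · refine Finset.mem_union_left _ (Finset.mem_union_left _ ?_)
      rw [hQ1, Finset.mem_image]
      exact ⟨(x, u), Finset.mem_univ _, by subst hxy; subst huv; rfl⟩
    · refine Finset.mem_union_left _ (Finset.mem_union_right _ ?_)
      rw [hQ2, Finset.mem_image]
      exact ⟨(x, y), Finset.mem_univ _, by subst hxu; subst hyv; rfl⟩
    · refine Finset.mem_union_right _ ?_
      rw [hQ3, Finset.mem_image]
      exact ⟨(x, y), Finset.mem_univ _, by subst hxv; subst hyu; rfl⟩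
  refine le_trans (Finset.sum_le_sum
    (g := fun q : (V n × V n) × (V n × V n) => if q ∈ Q1 ∪ Q2 ∪ Q3 then N else 0) ?_) ?_
  · intro q _
    by_cases h : (mv q.1.1 + mv q.1.2) + (mv q.2.1 + mv q.2.2) = 0
    · rw [if_pos h, if_pos (hmem q h)]
    · rw [if_neg h]
      split_ifs with h2
      · exact hN0
      · exact le_rfl
  · rw [sum_ite_card (fun q : (V n × V n) × (V n × V n) => q ∈ Q1 ∪ Q2 ∪ Q3) N]
    have hfilter : Finset.univ.filter (fun q : (V n × V n) × (V n × V n) => q ∈ Q1 ∪ Q2 ∪ Q3)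
        = Q1 ∪ Q2 ∪ Q3 := by
      ext q; simp
    rw [hfilter]
    have hVV : (Finset.univ : Finset (V n × V n)).card = 2 ^ n * 2 ^ n := by
      rw [Finset.card_univ, Fintype.card_prod, card_V]
    have hcard : (Q1 ∪ Q2 ∪ Q3).card ≤ 3 * (2 ^ n * 2 ^ n) := by
      have h1 : Q1.card ≤ 2 ^ n * 2 ^ n := hVV ▸ Finset.card_image_le
      have h2 : Q2.card ≤ 2 ^ n * 2 ^ n := hVV ▸ Finset.card_image_le
      have h3 : Q3.card ≤ 2 ^ n * 2 ^ n := hVV ▸ Finset.card_image_le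
      have := Finset.card_union_le (Q1 ∪ Q2) Q3
      have := Finset.card_union_le Q1 Q2
      omega
    have hc : ((Q1 ∪ Q2 ∪ Q3).card : ℤ) ≤ 3 * ((2 : ℤ) ^ n * 2 ^ n) := by
      exact_mod_cast hcard
    calc ((Q1 ∪ Q2 ∪ Q3).card : ℤ) * N ≤ (3 * ((2 : ℤ) ^ n * 2 ^ n)) * N :=
          mul_le_mul_of_nonneg_right hc hN0
      _ = 3 * ((2 : ℤ) ^ n * 2 ^ n) * N := rfl

lemma paley_zygmund (τ : ℝ) (hτ0 : 0 < τ) (hτ1 : τ < 1) :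
    ((1 - τ) ^ 2 / 3) * (Fintype.card (Coeff3 n) : ℝ)
      ≤ ((Finset.univ.filter
          (fun c : Coeff3 n => τ * 2 ^ n ≤ ((gap (poly3 c) : ℝ)) ^ 2)).card : ℝ) := by
  set A := Finset.univ.filter
      (fun c : Coeff3 n => τ * 2 ^ n ≤ ((gap (poly3 c) : ℝ)) ^ 2) with hA
  set g : Coeff3 n → ℝ := fun c => ((gap (poly3 c) : ℤ) : ℝ) with hg
  set N : ℝ := (Fintype.card (Coeff3 n) : ℝ) with hNdef
  have hN0 : 0 < N := by
    rw [hNdef]; exact_mod_cast Fintype.card_pos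
  have h2n : (0:ℝ) < 2 ^ n := by positivity
  have hs2 : ∑ c : Coeff3 n, g c ^ 2 = 2 ^ n * N := by
    have h := sum_gap_sq (n := n)
    have h2 := congrArg (fun z : ℤ => (z : ℝ)) h
    push_cast at h2
    simpa [hg, hNdef] using h2
  have hs4 : ∑ c : Coeff3 n, g c ^ 4 ≤ 3 * (2 ^ n * 2 ^ n) * N := by
    have h := sum_gap_four_le (n := n)
    have h2 : ((∑ c : Coeff3 n, (gap (poly3 c)) ^ 4 : ℤ) : ℝ)
        ≤ ((3 * ((2:ℤ) ^ n * 2 ^ n) * (Fintype.card (Coeff3 n) : ℤ) : ℤ) : ℝ) := by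
      exact_mod_cast h
    push_cast at h2
    simpa [hg, hNdef] using h2
  have hsplit := Finset.sum_filter_add_sum_filter_not Finset.univ
    (fun c : Coeff3 n => τ * 2 ^ n ≤ ((gap (poly3 c) : ℝ)) ^ 2) (fun c => g c ^ 2)
  rw [← hA] at hsplit
  set B := Finset.univ.filter
      (fun c : Coeff3 n => ¬ (τ * 2 ^ n ≤ ((gap (poly3 c) : ℝ)) ^ 2)) with hB
  have hBle : ∑ c ∈ B, g c ^ 2 ≤ τ * 2 ^ n * N := by
    calc ∑ c ∈ B, g c ^ 2 ≤ ∑ _c ∈ B, τ * 2 ^ n := by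
          refine Finset.sum_le_sum ?_
          intro c hc
          have hnc : ¬ (τ * 2 ^ n ≤ ((gap (poly3 c) : ℝ)) ^ 2) :=
            (Finset.mem_filter.mp hc).2
          exact le_of_not_ge hnc
      _ = B.card * (τ * 2 ^ n) := by rw [Finset.sum_const, nsmul_eq_mul]
      _ ≤ N * (τ * 2 ^ n) := by
          refine mul_le_mul_of_nonneg_right ?_ (by positivity)
          rw [hNdef, hB]
          exact_mod_cast Finset.card_filter_le _ _
      _ = τ * 2 ^ n * N := by ring
  have hAge : (1 - τ) * 2 ^ n * N ≤ ∑ c ∈ A, g c ^ 2 := by linarith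
  have hApos : (0:ℝ) ≤ (1 - τ) * 2 ^ n * N := by
    have h1τ : (0:ℝ) ≤ 1 - τ := by linarith
    positivity
  have hCS : (∑ c ∈ A, g c ^ 2) ^ 2 ≤ (A.card : ℝ) * ∑ c ∈ A, (g c ^ 2) ^ 2 :=
    sq_sum_le_card_mul_sum_sq
  have hA4 : ∑ c ∈ A, (g c ^ 2) ^ 2 ≤ 3 * (2 ^ n * 2 ^ n) * N := by
    refine le_trans ?_ hs4
    have hexp : ∀ c : Coeff3 n, (g c ^ 2) ^ 2 = g c ^ 4 := by intro c; ring
    simp only [hexp]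
    refine Finset.sum_le_sum_of_subset_of_nonneg (by rw [hA]; exact Finset.filter_subset _ _) ?_
    intro c _ _
    positivity
  have hchain : ((1 - τ) * 2 ^ n * N) ^ 2 ≤ (A.card : ℝ) * (3 * (2 ^ n * 2 ^ n) * N) := by
    calc ((1 - τ) * 2 ^ n * N) ^ 2 ≤ (∑ c ∈ A, g c ^ 2) ^ 2 :=
          pow_le_pow_left₀ hApos hAge 2
      _ ≤ (A.card : ℝ) * ∑ c ∈ A, (g c ^ 2) ^ 2 := hCS
      _ ≤ (A.card : ℝ) * (3 * (2 ^ n * 2 ^ n) * N) := by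
          refine mul_le_mul_of_nonneg_left hA4 ?_
          positivity
  have e1 : ((1 - τ) * 2 ^ n * N) ^ 2 = ((1 - τ) ^ 2 * N) * (2 ^ n * 2 ^ n * N) := by ring
  have e2 : (A.card : ℝ) * (3 * (2 ^ n * 2 ^ n) * N)
      = (3 * (A.card : ℝ)) * (2 ^ n * 2 ^ n * N) := by ring
  rw [e1, e2] at hchain
  have hpos : (0:ℝ) < 2 ^ n * 2 ^ n * N := by positivity
  have key : (1 - τ) ^ 2 * N ≤ 3 * (A.card : ℝ) := le_of_mul_le_mul_right hchain hpos
  linarith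

end AC

lemma AC.V_add_add_self {n : ℕ} (w z : Fin n → ZMod 2) : w + z + z = w := by
  funext i
  show w i + z i + z i = w i
  rw [add_assoc, zmod2_add_self, add_zero]

lemma AC.shift_eq {n : ℕ} (z : Fin n → ZMod 2) (c : Coeff3 n) :
    (fun x => poly3 c x + ∑ i, z i * x i)
      = poly3 (c.1 + z, c.2.1, c.2.2) := by
  funext x
  simp only [poly3, Pi.add_apply, add_mul, Finset.sum_add_distrib]
  ring

/-- Anti-concentration for random degree-3 polynomials over `𝔽₂`: for
`0 < τ < 1`, the number of pairs `(z, f)` of an `n`-bit string and a degree-3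
polynomial (i.e. a coefficient tuple) with `gap(f_z)² ≥ τ·2ⁿ` is at least
`((1−τ)²/3)·2ⁿ·|C|`; equivalently, for uniformly random `(z, f)`,
`Pr[gap(f_z)²/2^{2n} ≥ τ/2ⁿ] ≥ (1−τ)²/3`. -/
theorem anticoncentration_deg3 (n : ℕ) (hn : 1 ≤ n)
    (τ : ℝ) (hτ0 : 0 < τ) (hτ1 : τ < 1) :
    ((1 - τ) ^ 2 / 3) * (2 ^ n * (Fintype.card (Coeff3 n) : ℝ))
      ≤ ((Finset.univ.filter
          (fun p : (Fin n → ZMod 2) × Coeff3 n =>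
            τ * 2 ^ n ≤
              ((gap (fun x => poly3 p.2 x + ∑ i, p.1 i * x i) : ℝ)) ^ 2)).card
          : ℝ) := by
  have hbij : (Finset.univ.filter
          (fun p : (Fin n → ZMod 2) × Coeff3 n =>
            τ * 2 ^ n ≤
              ((gap (fun x => poly3 p.2 x + ∑ i, p.1 i * x i) : ℝ)) ^ 2)).card
      = (Finset.univ.filter
          (fun p : (Fin n → ZMod 2) × Coeff3 n =>
            τ * 2 ^ n ≤ ((gap (poly3 p.2) : ℝ)) ^ 2)).card := by
    refine Finset.card_nbij'
      (fun p => (p.1, (p.2.1 + p.1, p.2.2.1, p.2.2.2)))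
      (fun p => (p.1, (p.2.1 + p.1, p.2.2.1, p.2.2.2)))
      ?_ ?_ ?_ ?_
    · intro p hp
      simp only [Finset.mem_coe, Finset.mem_filter, Finset.mem_univ, true_and] at hp ⊢
      rw [← AC.shift_eq p.1 p.2]
      exact hp
    · intro p hp
      simp only [Finset.mem_coe, Finset.mem_filter, Finset.mem_univ, true_and] at hp ⊢
      rw [AC.shift_eq p.1 (p.2.1 + p.1, p.2.2.1, p.2.2.2)]
      dsimp only
      rw [AC.V_add_add_self]
      exact hp
    · intro p _
      show (p.1, (p.2.1 + p.1 + p.1, p.2.2.1, p.2.2.2)) = p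
      rw [AC.V_add_add_self]
    · intro p _
      show (p.1, (p.2.1 + p.1 + p.1, p.2.2.1, p.2.2.2)) = p
      rw [AC.V_add_add_self]
  rw [hbij]
  have hprod : (Finset.univ.filter
          (fun p : (Fin n → ZMod 2) × Coeff3 n =>
            τ * 2 ^ n ≤ ((gap (poly3 p.2) : ℝ)) ^ 2))
      = (Finset.univ : Finset (Fin n → ZMod 2)) ×ˢ
        (Finset.univ.filter (fun c : Coeff3 n => τ * 2 ^ n ≤ ((gap (poly3 c) : ℝ)) ^ 2)) := by
    ext p
    simp only [Finset.mem_filter, Finset.mem_univ, true_and, Finset.mem_product]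
  rw [hprod, Finset.card_product, Finset.card_univ]
  have hVcard : Fintype.card (Fin n → ZMod 2) = 2 ^ n := by
    rw [Fintype.card_fun]; simp
  rw [hVcard]
  have hpz := AC.paley_zygmund (n := n) τ hτ0 hτ1
  push_cast
  calc ((1 - τ) ^ 2 / 3) * ((2:ℝ) ^ n * (Fintype.card (Coeff3 n) : ℝ))
      = 2 ^ n * (((1 - τ) ^ 2 / 3) * (Fintype.card (Coeff3 n) : ℝ)) := by ring
    _ ≤ 2 ^ n * ((Finset.univ.filter
          (fun c : Coeff3 n => τ * 2 ^ n ≤ ((gap (poly3 c) : ℝ)) ^ 2)).card : ℝ) := by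
        exact mul_le_mul_of_nonneg_left hpz (by positivity)
end
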